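/- arXiv:2403.14936 — 10 statements merged into one kernel-verified Lean document; each statement's English description precedes it below -/
import Mathlib

section
/- Let A be a (multiplicative) free monoid algebra over ℚ on an alphabet A₀, and suppose the ℚ-span 𝔷 of A₀ carries a commutative (not necessarily unital) ℚ-bilinear product ∘. Define the harmonic product ∗ on the free algebra 𝔥¹ = ℚ⟨A₀⟩ recursively by 1 ∗ w = w ∗ 1 = w and (a w₁) ∗ (b w₂) = a(w₁ ∗ b w₂) + b(a w₁ ∗ w₂) + (a ∘ b)(w₁ ∗ w₂) for letters a, b and words w₁, w₂. For a parameter r, define the ℚ[r]-linear map S^r on 𝔥¹[r] by S^r(1) = 1 and S^r(a w) = a S^r(w) + r · (a ∘ S^r(w)), where a ∘ (b v) := (a ∘ b) v and a ∘ 1 := 0. Then for any letters a₁, …, aₙ ∈ 𝔷, S^r(a₁ a₂ ⋯ aₙ) = sum over i from 1 to n of r^(i-1) · (a₁ ∘ a₂ ∘ ⋯ ∘ aᵢ) · S^r(a_{i+1} ⋯ aₙ). -/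
/-- The `i`-fold circle product `a₁ ∘ a₂ ∘ ⋯` of a nonempty list of elements
(`0` for the empty list, which is never used). -/
def circFold {Z : Type*} [Zero Z] (c : Z → Z → Z) : List Z → Z
  | [] => 0
  | a :: t => t.foldl c a

/-- Iterated circle powers: `circPow c a i = a^{∘(i+1)}`. -/
def circPow {Z : Type*} (c : Z → Z → Z) (a : Z) : ℕ → Z
  | 0 => a
  | k + 1 => c (circPow c a k) a

lemma foldl_assoc_aux {Z : Type*} (c : Z → Z → Z)
    (hassoc : ∀ a b d, c (c a b) d = c a (c b d)) :
    ∀ (u : List Z) (a b : Z), List.foldl c (c a b) u = c a (List.foldl c b u)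
  | [], a, b => rfl
  | d :: u, a, b => by
      rw [List.foldl_cons, hassoc, foldl_assoc_aux c hassoc u, List.foldl_cons]

theorem Sr_recursion
    {Z H : Type*} [AddCommGroup Z] [Module ℚ Z] [Ring H] [Algebra ℚ H]
    (ι : Z →ₗ[ℚ] H)
    (circ : Z →ₗ[ℚ] Z →ₗ[ℚ] Z)
    (hcomm : ∀ a b : Z, circ a b = circ b a)
    (hassoc : ∀ a b c : Z, circ (circ a b) c = circ a (circ b c))
    (act : Z →ₗ[ℚ] H →ₗ[ℚ] H)
    (hact_one : ∀ a : Z, act a 1 = 0)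
    (hact_rec : ∀ (a b : Z) (w : H), act a (ι b * w) = ι (circ a b) * w)
    (S : ℚ → H →ₗ[ℚ] H)
    (hS_one : ∀ r : ℚ, S r 1 = 1)
    (hS_rec : ∀ (r : ℚ) (a : Z) (w : H), S r (ι a * w) = ι a * S r w + r • act a (S r w))
    (r : ℚ) (l : List Z) (hl : l ≠ []) :
    S r ((l.map (fun a => ι a)).prod) =
      ∑ i ∈ Finset.range l.length,
        r ^ i • (ι (circFold (fun x y => circ x y) (l.take (i + 1))) *
          S r (((l.drop (i + 1)).map (fun a => ι a)).prod)) := by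
  induction l with
  | nil => exact absurd rfl hl
  | cons a t ih =>
    cases t with
    | nil =>
      rw [List.map_cons, List.map_nil, List.prod_cons, List.prod_nil, hS_rec, hS_one, hact_one]
      simp [circFold, hS_one]
    | cons b s =>
      have ih' := ih (by simp)
      rw [List.map_cons, List.prod_cons, hS_rec r a,
        show (a :: b :: s).length = (b :: s).length + 1 from rfl,
        Finset.sum_range_succ', add_comm]
      congr 1
      · rw [ih', map_sum, Finset.smul_sum]
        refine Finset.sum_congr rfl fun i _ => ?_
        rw [map_smul, hact_rec, smul_smul, mul_comm, ← pow_succ]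
        simp only [List.take_succ_cons, List.drop_succ_cons, circFold, List.foldl_cons]
        rw [foldl_assoc_aux _ hassoc]
      · simp [circFold]
end

section
/- In the setting of the harmonic algebra with circle product, for any single letter a ∈ 𝔷 and any positive integer n, S^r(a^n) = sum over i from 1 to n of r^(i-1) · a^(∘i) · S^r(a^(n-i)), where a^(∘i) denotes the i-fold circle product of a with itself and a^k denotes the word of k copies of a. -/
theorem Sr_pow_recursion
    {Z H : Type*} [AddCommGroup Z] [Module ℚ Z] [Ring H] [Algebra ℚ H]
    (ι : Z →ₗ[ℚ] H)
    (circ : Z →ₗ[ℚ] Z →ₗ[ℚ] Z)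
    (hcomm : ∀ a b : Z, circ a b = circ b a)
    (hassoc : ∀ a b c : Z, circ (circ a b) c = circ a (circ b c))
    (act : Z →ₗ[ℚ] H →ₗ[ℚ] H)
    (hact_one : ∀ a : Z, act a 1 = 0)
    (hact_rec : ∀ (a b : Z) (w : H), act a (ι b * w) = ι (circ a b) * w)
    (S : ℚ → H →ₗ[ℚ] H)
    (hS_one : ∀ r : ℚ, S r 1 = 1)
    (hS_rec : ∀ (r : ℚ) (a : Z) (w : H), S r (ι a * w) = ι a * S r w + r • act a (S r w))
    (r : ℚ) (a : Z) (n : ℕ) (hn : 1 ≤ n) :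
    S r ((ι a) ^ n) =
      ∑ i ∈ Finset.range n,
        r ^ i • (ι (circPow (fun x y => circ x y) a i) * S r ((ι a) ^ (n - 1 - i))) := by
  induction n, hn using Nat.le_induction with
  | base =>
    have h := hS_rec r a 1
    simp only [hS_one, hact_one, mul_one, smul_zero, add_zero] at h
    simp [circPow, h, hS_one]
  | succ n hn ih =>
    have key : act a (S r ((ι a) ^ n)) =
        ∑ i ∈ Finset.range n,
          r ^ i • (ι (circPow (fun x y => circ x y) a (i + 1)) * S r ((ι a) ^ (n - 1 - i))) := by
      rw [ih, map_sum]
      refine Finset.sum_congr rfl fun i _ => ?_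
      rw [map_smul, hact_rec]
      have : circPow (fun x y => circ x y) a (i + 1) = circ a (circPow (fun x y => circ x y) a i) := by
        simp [circPow, hcomm]
      rw [this]
    rw [pow_succ', hS_rec, key, Finset.sum_range_succ']
    simp only [Nat.add_sub_cancel, Nat.sub_zero, pow_zero, one_smul, circPow, Finset.smul_sum,
      smul_smul]
    rw [add_comm]
    congr 1
    refine Finset.sum_congr rfl fun i _ => ?_
    have he : n - 1 - i = n - (i + 1) := by omega
    rw [he, ← pow_succ']
end

section
/- In the harmonic algebra setting, for any a ∈ 𝔷 and any positive integer n, the identity S^r(a^n) = sum over i from 0 to n of r^(n-i) * (1-r)^i * (a^i ∗ S(a^(n-i))) holds, where S = S^1 and ∗ is the harmonic product. -/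
theorem Sr_pow_star
    {Z H : Type*} [AddCommGroup Z] [Module ℚ Z] [Ring H] [Algebra ℚ H]
    (ι : Z →ₗ[ℚ] H)
    (circ : Z →ₗ[ℚ] Z →ₗ[ℚ] Z)
    (hcomm : ∀ a b : Z, circ a b = circ b a)
    (hassoc : ∀ a b c : Z, circ (circ a b) c = circ a (circ b c))
    (astar : H →ₗ[ℚ] H →ₗ[ℚ] H)
    (hstar_one_left : ∀ w : H, astar 1 w = w)
    (hstar_one_right : ∀ w : H, astar w 1 = w)
    (hstar_rec : ∀ (a b : Z) (w₁ w₂ : H),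
      astar (ι a * w₁) (ι b * w₂) =
        ι a * astar w₁ (ι b * w₂) + ι b * astar (ι a * w₁) w₂ + ι (circ a b) * astar w₁ w₂)
    (act : Z →ₗ[ℚ] H →ₗ[ℚ] H)
    (hact_one : ∀ a : Z, act a 1 = 0)
    (hact_rec : ∀ (a b : Z) (w : H), act a (ι b * w) = ι (circ a b) * w)
    (S : ℚ → H →ₗ[ℚ] H)
    (hS_one : ∀ r : ℚ, S r 1 = 1)
    (hS_rec : ∀ (r : ℚ) (a : Z) (w : H), S r (ι a * w) = ι a * S r w + r • act a (S r w))
    (r : ℚ) (a : Z) (n : ℕ) (hn : 1 ≤ n) :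
    S r ((ι a) ^ n) =
      ∑ i ∈ Finset.range (n + 1),
        (r ^ (n - i) * (1 - r) ^ i) • astar ((ι a) ^ i) (S 1 ((ι a) ^ (n - i))) := by
  clear hn
  set gen : Set H := Set.range fun l : List Z => (l.map ι).prod with hgen
  have hword : ∀ l : List Z, (l.map ι).prod ∈ Submodule.span ℚ gen :=
    fun l => Submodule.subset_span ⟨l, rfl⟩
  -- S 1 facts
  have hsrec : ∀ m : ℕ, S 1 (ι a ^ (m + 1)) = ι a * S 1 (ι a ^ m) + act a (S 1 (ι a ^ m)) := by
    intro m
    rw [pow_succ', hS_rec]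
    simp
  have hsP : ∀ m : ℕ, S 1 (ι a ^ m : H) ∈ Submodule.span ℚ gen := by
    intro m
    induction m with
    | zero =>
        rw [pow_zero, hS_one]
        simpa using hword []
    | succ m ih =>
        rw [hsrec]
        refine Submodule.add_mem _ ?_ ?_
        · -- ι a * (element of span) ∈ span
          have hle : Submodule.span ℚ gen ≤
              (Submodule.span ℚ gen).comap (LinearMap.mulLeft ℚ (ι a)) := by
            refine Submodule.span_le.2 ?_
            rintro _ ⟨l, rfl⟩
            simpa [Submodule.mem_comap, List.prod_cons] using hword (a :: l)
          exact hle ih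
        · -- act a of element of span ∈ span
          have hle : Submodule.span ℚ gen ≤
              (Submodule.span ℚ gen).comap (act a) := by
            refine Submodule.span_le.2 ?_
            rintro _ ⟨l, rfl⟩
            simp only [SetLike.mem_coe, Submodule.mem_comap]
            cases l with
            | nil => simpa [hact_one] using Submodule.zero_mem _
            | cons c t => simpa [hact_rec, List.prod_cons] using hword (circ a c :: t)
          exact hle ih
  -- the one-step star recursion in power form
  have hR : ∀ (j : ℕ) (b : Z) (u : H),
      astar (ι a ^ (j + 1)) (ι b * u)
        = ι a * astar (ι a ^ j) (ι b * u) + ι b * astar (ι a ^ (j + 1)) u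
            + ι (circ a b) * astar (ι a ^ j) u := by
    intro j b u
    rw [pow_succ']
    exact hstar_rec a b (ι a ^ j) u
  have hDx : ∀ j : ℕ, act a (ι a ^ (j + 1)) = ι (circ a a) * ι a ^ j := by
    intro j
    rw [pow_succ', hact_rec]
  -- key lemma (★)
  have hkey : ∀ (i : ℕ), ∀ v ∈ Submodule.span ℚ gen,
      astar (ι a ^ (i + 1)) (ι a * v + act a v)
        = ι a * astar (ι a ^ i) (ι a * v + act a v)
          + (ι a * astar (ι a ^ (i + 1)) v + act a (astar (ι a ^ (i + 1)) v)) := by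
    intro i v hv
    set E : H →ₗ[ℚ] H := LinearMap.mulLeft ℚ (ι a) + act a with hE
    have hEapp : ∀ u : H, E u = ι a * u + act a u := fun u => rfl
    have h := LinearMap.eqOn_span
      (f := (astar (ι a ^ (i + 1))).comp E)
      (g := (LinearMap.mulLeft ℚ (ι a)).comp ((astar (ι a ^ i)).comp E)
            + E.comp (astar (ι a ^ (i + 1))))
      (s := gen) ?_ hv
    · simpa only [LinearMap.comp_apply, LinearMap.add_apply, LinearMap.mulLeft_apply,
        hEapp] using h
    · rintro _ ⟨l, rfl⟩
      simp only [LinearMap.comp_apply, LinearMap.add_apply, LinearMap.mulLeft_apply, hEapp]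
      cases l with
      | nil =>
          simp only [List.map_nil, List.prod_nil, hact_one, add_zero]
          simp only [hR, hstar_one_right, hDx, mul_add]
          abel
      | cons c t =>
          simp only [List.map_cons, List.prod_cons, hact_rec, map_add, hR, mul_add,
            mul_assoc]
          abel
  -- star recursion for A i m
  have hA3 : ∀ (i m : ℕ),
      astar (ι a ^ (i + 1)) (S 1 (ι a ^ (m + 1)))
        = ι a * astar (ι a ^ i) (S 1 (ι a ^ (m + 1)))
          + (ι a * astar (ι a ^ (i + 1)) (S 1 (ι a ^ m))
              + act a (astar (ι a ^ (i + 1)) (S 1 (ι a ^ m)))) := by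
    intro i m
    have h := hkey i (S 1 (ι a ^ m)) (hsP m)
    rwa [← hsrec m] at h
  have hA0 : ∀ m : ℕ, astar ((ι a) ^ 0) (S 1 (ι a ^ m)) = S 1 (ι a ^ m) := by
    intro m; rw [pow_zero, hstar_one_left]
  have hAi0 : ∀ i : ℕ, astar ((ι a) ^ i) (S 1 (ι a ^ 0)) = ι a ^ i := by
    intro i; rw [pow_zero, hS_one, hstar_one_right]
  -- main induction
  suffices main : ∀ n : ℕ, S r ((ι a) ^ n) =
      ∑ i ∈ Finset.range (n + 1),
        (r ^ (n - i) * (1 - r) ^ i) • astar ((ι a) ^ i) (S 1 ((ι a) ^ (n - i))) from main n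
  intro n
  induction n with
  | zero => simp [hS_one, hstar_one_left]
  | succ n ih =>
      have hL : S r (ι a ^ (n + 1)) = ι a * S r (ι a ^ n) + r • act a (S r (ι a ^ n)) := by
        rw [pow_succ', hS_rec]
      rw [hL, ih, Finset.mul_sum, map_sum, Finset.smul_sum]
      simp only [map_smul, mul_smul_comm, smul_smul]
      rw [← Finset.sum_add_distrib]
      -- split RHS sum
      have hsplit : ∑ i ∈ Finset.range (n + 1 + 1),
          (r ^ (n + 1 - i) * (1 - r) ^ i) • astar ((ι a) ^ i) (S 1 ((ι a) ^ (n + 1 - i)))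
          = ∑ i ∈ Finset.range (n + 1 + 1),
            ((if i = 0 then 0 else
                (r ^ (n + 1 - i) * (1 - r) ^ i) •
                  (ι a * astar ((ι a) ^ (i - 1)) (S 1 ((ι a) ^ (n + 1 - i)))))
             + (if i = n + 1 then 0 else
                (r ^ (n + 1 - i) * (1 - r) ^ i) •
                  (ι a * astar ((ι a) ^ i) (S 1 ((ι a) ^ (n - i)))
                    + act a (astar ((ι a) ^ i) (S 1 ((ι a) ^ (n - i))))))) := by
        refine Finset.sum_congr rfl fun i hi => ?_
        rcases Nat.eq_zero_or_pos i with h0 | hpos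
        · subst h0
          rw [if_pos rfl, if_neg (by omega : ¬ (0:ℕ) = n + 1), zero_add]
          simp only [Nat.sub_zero]
          rw [hA0 (n + 1), hA0 n, hsrec n]
        · obtain ⟨j, rfl⟩ : ∃ j, i = j + 1 := ⟨i - 1, by omega⟩
          rw [if_neg (Nat.succ_ne_zero j)]
          by_cases hj : j = n
          · subst hj
            rw [if_pos rfl, add_zero]
            have e0 : j + 1 - (j + 1) = 0 := by omega
            rw [e0, Nat.add_sub_cancel, hAi0 (j + 1), hAi0 j, pow_succ' (ι a) j]
          · have hjn : j < n := by
              have := Finset.mem_range.1 hi; omega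
            rw [if_neg (by omega : ¬ j + 1 = n + 1)]
            have e1 : n + 1 - (j + 1) = (n - (j + 1)) + 1 := by omega
            have e2 : n - j = n - (j + 1) + 1 := by omega
            rw [Nat.add_sub_cancel, e1, hA3 j (n - (j + 1)), smul_add, ← e2]
      have hF : ∑ i ∈ Finset.range (n + 1 + 1),
          (if i = 0 then 0 else
            (r ^ (n + 1 - i) * (1 - r) ^ i) •
              (ι a * astar ((ι a) ^ (i - 1)) (S 1 ((ι a) ^ (n + 1 - i)))))
          = ∑ i ∈ Finset.range (n + 1),
            (r ^ (n - i) * (1 - r) ^ (i + 1)) •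
              (ι a * astar ((ι a) ^ i) (S 1 ((ι a) ^ (n - i)))) := by
        rw [Finset.sum_range_succ', if_pos rfl, add_zero]
        refine Finset.sum_congr rfl fun i _ => ?_
        rw [if_neg (Nat.succ_ne_zero i), Nat.add_sub_cancel, Nat.succ_sub_succ]
      have hG : ∑ i ∈ Finset.range (n + 1 + 1),
          (if i = n + 1 then 0 else
            (r ^ (n + 1 - i) * (1 - r) ^ i) •
              (ι a * astar ((ι a) ^ i) (S 1 ((ι a) ^ (n - i)))
                + act a (astar ((ι a) ^ i) (S 1 ((ι a) ^ (n - i))))))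
          = ∑ i ∈ Finset.range (n + 1),
            (r ^ (n + 1 - i) * (1 - r) ^ i) •
              (ι a * astar ((ι a) ^ i) (S 1 ((ι a) ^ (n - i)))
                + act a (astar ((ι a) ^ i) (S 1 ((ι a) ^ (n - i))))) := by
        rw [Finset.sum_range_succ, if_pos rfl, add_zero]
        refine Finset.sum_congr rfl fun i hi => ?_
        rw [if_neg (by have := Finset.mem_range.1 hi; omega : ¬ i = n + 1)]
      have hRHS : ∑ i ∈ Finset.range (n + 1 + 1),
          (r ^ (n + 1 - i) * (1 - r) ^ i) • astar ((ι a) ^ i) (S 1 ((ι a) ^ (n + 1 - i)))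
          = ∑ i ∈ Finset.range (n + 1),
            ((r ^ (n - i) * (1 - r) ^ (i + 1)) •
                (ι a * astar ((ι a) ^ i) (S 1 ((ι a) ^ (n - i))))
              + (r ^ (n + 1 - i) * (1 - r) ^ i) •
                (ι a * astar ((ι a) ^ i) (S 1 ((ι a) ^ (n - i)))
                  + act a (astar ((ι a) ^ i) (S 1 ((ι a) ^ (n - i)))))) := by
        rw [hsplit, Finset.sum_add_distrib, hF, hG, ← Finset.sum_add_distrib]
      rw [hRHS]
      refine Finset.sum_congr rfl fun i hi => ?_
      have hile : i ≤ n := by have := Finset.mem_range.1 hi; omega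
      have e : n + 1 - i = (n - i) + 1 := by omega
      have hc1 : r ^ (n - i) * (1 - r) ^ (i + 1) + r ^ (n + 1 - i) * (1 - r) ^ i
          = r ^ (n - i) * (1 - r) ^ i := by rw [e]; ring
      have hc2 : r ^ (n + 1 - i) * (1 - r) ^ i = r * (r ^ (n - i) * (1 - r) ^ i) := by
        rw [e]; ring
      conv_rhs => rw [smul_add, ← add_assoc, ← add_smul, hc1]
      rw [hc2]
end

section
/- In the harmonic algebra setting, for any a ∈ 𝔷 and any positive integer n, the identity sum over i from 0 to n of (-1)^i * (a^i ∗ S(a^(n-i))) = 0 holds, where S = S^1. -/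
private lemma tri_swap {M : Type*} [AddCommMonoid M] (f : ℕ → ℕ → M) :
    ∀ n : ℕ, ∑ i ∈ Finset.range n, ∑ k ∈ Finset.range (n - i), f i k
      = ∑ k ∈ Finset.range n, ∑ i ∈ Finset.range (n - k), f i k := by
  intro n
  induction n with
  | zero => simp
  | succ n ih =>
    have hsplit : ∀ g : ℕ → ℕ → M,
        ∑ i ∈ Finset.range (n + 1), ∑ k ∈ Finset.range (n + 1 - i), g i k
        = (∑ i ∈ Finset.range n, ∑ k ∈ Finset.range (n - i), g i k)
          + ∑ i ∈ Finset.range (n + 1), g i (n - i) := by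
      intro g
      have h1 : ∀ i ∈ Finset.range (n + 1), ∑ k ∈ Finset.range (n + 1 - i), g i k
          = ∑ k ∈ Finset.range (n - i), g i k + g i (n - i) := by
        intro i hi
        have hi' : i ≤ n := Nat.lt_succ_iff.mp (Finset.mem_range.mp hi)
        have : n + 1 - i = (n - i) + 1 := by omega
        rw [this, Finset.sum_range_succ]
      rw [Finset.sum_congr rfl h1, Finset.sum_add_distrib,
        Finset.sum_range_succ (fun i => ∑ k ∈ Finset.range (n - i), g i k), Nat.sub_self]
      simp
    have hdiag : ∑ i ∈ Finset.range (n + 1), f i (n - i)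
        = ∑ k ∈ Finset.range (n + 1), f (n - k) k := by
      have h := Finset.sum_range_reflect (fun i => f i (n - i)) (n + 1)
      rw [← h]
      refine Finset.sum_congr rfl fun k hk => ?_
      have hk' : k ≤ n := Nat.lt_succ_iff.mp (Finset.mem_range.mp hk)
      have h1 : n + 1 - 1 - k = n - k := by omega
      have h2 : n - (n - k) = k := by omega
      rw [h1, h2]
    rw [hsplit f, hsplit (fun k i => f i k), ih, hdiag]

section Aux

variable {Z H : Type*} [AddCommGroup Z] [Module ℚ Z] [Ring H] [Algebra ℚ H]
  (ι : Z →ₗ[ℚ] H) (circ : Z →ₗ[ℚ] Z →ₗ[ℚ] Z)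
  (act : Z →ₗ[ℚ] H →ₗ[ℚ] H) (astar : H →ₗ[ℚ] H →ₗ[ℚ] H)
  (S1 : H →ₗ[ℚ] H) (a : Z)

private lemma S_decomp
    (hcomm : ∀ b c : Z, circ b c = circ c b)
    (hact_one : act a 1 = 0)
    (hact_rec : ∀ (b : Z) (w : H), act a (ι b * w) = ι (circ a b) * w)
    (hS_one : S1 1 = 1)
    (hS_rec : ∀ w : H, S1 (ι a * w) = ι a * S1 w + act a (S1 w)) :
    ∀ m : ℕ, S1 ((ι a) ^ (m + 1))
      = ∑ k ∈ Finset.range (m + 1),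
          ι (circPow (fun x y : Z => circ x y) a k) * S1 ((ι a) ^ (m - k)) := by
  intro m
  induction m with
  | zero =>
    have h1 : ((ι a : H)) ^ 1 = ι a * 1 := by rw [pow_one, mul_one]
    rw [h1, hS_rec, hS_one, hact_one]
    simp [circPow, hS_one]
  | succ m ih =>
    have hact' : act a (S1 ((ι a) ^ (m + 1))) = ∑ k ∈ Finset.range (m + 1),
        ι (circPow (fun x y : Z => circ x y) a (k + 1)) * S1 ((ι a) ^ (m - k)) := by
      rw [ih, map_sum]
      refine Finset.sum_congr rfl fun k hk => ?_
      rw [hact_rec, hcomm]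
      rfl
    rw [pow_succ' (ι a : H) (m + 1), hS_rec, hact', Finset.sum_range_succ' _ (m + 1)]
    simp only [Nat.add_sub_add_right, Nat.succ_sub_succ, Nat.sub_zero]
    rw [show ι (circPow (fun x y : Z => circ x y) a 0) = ι a from rfl, add_comm]

private lemma G_rec
    (hcomm : ∀ b c : Z, circ b c = circ c b)
    (hstar_one_right : ∀ w : H, astar w 1 = w)
    (hstar_rec : ∀ (b c : Z) (w₁ w₂ : H),
      astar (ι b * w₁) (ι c * w₂) =
        ι b * astar w₁ (ι c * w₂) + ι c * astar (ι b * w₁) w₂ + ι (circ b c) * astar w₁ w₂)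
    (hact_one : act a 1 = 0)
    (hact_rec : ∀ (b : Z) (w : H), act a (ι b * w) = ι (circ a b) * w)
    (hS_one : S1 1 = 1)
    (hS_rec : ∀ w : H, S1 (ι a * w) = ι a * S1 w + act a (S1 w)) :
    ∀ i j : ℕ, astar ((ι a) ^ (i + 1)) (S1 ((ι a) ^ j))
      = ι a * astar ((ι a) ^ i) (S1 ((ι a) ^ j))
        + ∑ k ∈ Finset.range j,
            ι (circPow (fun x y : Z => circ x y) a k)
              * astar ((ι a) ^ (i + 1)) (S1 ((ι a) ^ (j - 1 - k)))
        + ∑ k ∈ Finset.range j,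
            ι (circPow (fun x y : Z => circ x y) a (k + 1))
              * astar ((ι a) ^ i) (S1 ((ι a) ^ (j - 1 - k))) := by
  intro i j
  cases j with
  | zero => simp [pow_zero, hS_one, hstar_one_right, pow_succ']
  | succ m =>
    rw [S_decomp ι circ act S1 a hcomm hact_one hact_rec hS_one hS_rec m,
      map_sum, map_sum, Finset.mul_sum]
    simp only [Nat.add_sub_cancel]
    rw [← Finset.sum_add_distrib, ← Finset.sum_add_distrib]
    refine Finset.sum_congr rfl fun k hk => ?_
    rw [pow_succ' (ι a : H) i, hstar_rec, hcomm a]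
    rfl

variable (hcomm : ∀ b c : Z, circ b c = circ c b)
  (hstar_one_left : ∀ w : H, astar 1 w = w)
  (hstar_one_right : ∀ w : H, astar w 1 = w)
  (hstar_rec : ∀ (b c : Z) (w₁ w₂ : H),
    astar (ι b * w₁) (ι c * w₂) =
      ι b * astar w₁ (ι c * w₂) + ι c * astar (ι b * w₁) w₂ + ι (circ b c) * astar w₁ w₂)
  (hact_one : act a 1 = 0)
  (hact_rec : ∀ (b : Z) (w : H), act a (ι b * w) = ι (circ a b) * w)
  (hS_one : S1 1 = 1)
  (hS_rec : ∀ w : H, S1 (ι a * w) = ι a * S1 w + act a (S1 w))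

private def Fsum (m : ℕ) : H :=
  ∑ i ∈ Finset.range (m + 1), (-1 : ℚ) ^ i • astar ((ι a) ^ i) (S1 ((ι a) ^ (m - i)))

include hcomm hstar_one_left hstar_one_right hstar_rec hact_one hact_rec hS_one hS_rec in
private lemma F_zero : ∀ N : ℕ, Fsum ι astar S1 a (N + 1) = 0 := by
  intro N
  obtain ⟨A, hAdef⟩ : ∃ A : ℕ → Z, ∀ k, A k = circPow (fun x y : Z => circ x y) a k :=
    ⟨_, fun _ => rfl⟩
  obtain ⟨G, hGdef⟩ : ∃ G : ℕ → ℕ → H, ∀ i m, G i m = astar ((ι a) ^ i) (S1 ((ι a) ^ m)) :=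
    ⟨_, fun _ _ => rfl⟩
  have hF0 : Fsum ι astar S1 a 0 = 1 := by
    simp [Fsum, hS_one, hstar_one_left]
  have hFsum : ∀ m : ℕ, Fsum ι astar S1 a m
      = ∑ i ∈ Finset.range (m + 1), (-1 : ℚ) ^ i • G i (m - i) := by
    intro m
    simp only [Fsum, hGdef]
  -- Step 1 : peel off the i = 0 term
  have step1 : Fsum ι astar S1 a (N + 1)
      = ∑ i ∈ Finset.range (N + 1), (-1 : ℚ) ^ (i + 1) • G (i + 1) (N - i)
        + S1 ((ι a) ^ (N + 1)) := by
    rw [hFsum, Finset.sum_range_succ' _ (N + 1)]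
    simp [hGdef, hstar_one_left]
  -- expand each G (i+1) (N-i) via the recurrence
  have expand : ∀ i ∈ Finset.range (N + 1),
      (-1 : ℚ) ^ (i + 1) • G (i + 1) (N - i)
      = (-1 : ℚ) ^ (i + 1) • (ι a * G i (N - i))
        + (∑ k ∈ Finset.range (N - i),
            (-1 : ℚ) ^ (i + 1) • (ι (A k) * G (i + 1) (N - i - 1 - k)))
        + (∑ k ∈ Finset.range (N - i),
            (-1 : ℚ) ^ (i + 1) • (ι (A (k + 1)) * G i (N - i - 1 - k))) := by
    intro i _
    rw [hGdef]
    rw [G_rec ι circ act astar S1 a hcomm hstar_one_right hstar_rec hact_one hact_rec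
      hS_one hS_rec i (N - i)]
    simp only [← hGdef, ← hAdef]
    rw [smul_add, smul_add, Finset.smul_sum, Finset.smul_sum]
  have step2 : Fsum ι astar S1 a (N + 1)
      = (∑ i ∈ Finset.range (N + 1), (-1 : ℚ) ^ (i + 1) • (ι a * G i (N - i)))
        + (∑ i ∈ Finset.range (N + 1), ∑ k ∈ Finset.range (N - i),
            (-1 : ℚ) ^ (i + 1) • (ι (A k) * G (i + 1) (N - i - 1 - k)))
        + (∑ i ∈ Finset.range (N + 1), ∑ k ∈ Finset.range (N - i),
            (-1 : ℚ) ^ (i + 1) • (ι (A (k + 1)) * G i (N - i - 1 - k)))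
        + S1 ((ι a) ^ (N + 1)) := by
    rw [step1, Finset.sum_congr rfl expand, Finset.sum_add_distrib, Finset.sum_add_distrib]
  -- T1
  have hT1 : ∑ i ∈ Finset.range (N + 1), (-1 : ℚ) ^ (i + 1) • (ι a * G i (N - i))
      = -(ι a * Fsum ι astar S1 a N) := by
    rw [hFsum, Finset.mul_sum, ← Finset.sum_neg_distrib]
    refine Finset.sum_congr rfl fun i _ => ?_
    rw [pow_succ, mul_neg_one, neg_smul, mul_smul_comm]
  -- helper to drop the empty i = N inner sum
  have hdrop : ∀ g : ℕ → ℕ → H,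
      ∑ i ∈ Finset.range (N + 1), ∑ k ∈ Finset.range (N - i), g i k
      = ∑ i ∈ Finset.range N, ∑ k ∈ Finset.range (N - i), g i k := by
    intro g
    rw [Finset.sum_range_succ, Nat.sub_self]
    simp
  -- T2
  have hT2 : ∑ i ∈ Finset.range (N + 1), ∑ k ∈ Finset.range (N - i),
        (-1 : ℚ) ^ (i + 1) • (ι (A k) * G (i + 1) (N - i - 1 - k))
      = ∑ k ∈ Finset.range N,
          ι (A k) * (Fsum ι astar S1 a (N - k) - S1 ((ι a) ^ (N - k))) := by
    rw [hdrop, tri_swap]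
    refine Finset.sum_congr rfl fun k hk => ?_
    have hfold : Fsum ι astar S1 a (N - k)
        = ∑ i ∈ Finset.range (N - k), (-1 : ℚ) ^ (i + 1) • G (i + 1) (N - k - (i + 1))
          + S1 ((ι a) ^ (N - k)) := by
      rw [hFsum, Finset.sum_range_succ' _ (N - k)]
      simp [hGdef, hstar_one_left]
    rw [hfold, add_sub_cancel_right, Finset.mul_sum]
    refine Finset.sum_congr rfl fun i _ => ?_
    rw [show N - i - 1 - k = N - k - (i + 1) from by omega, mul_smul_comm]
  -- T3
  have hT3 : ∑ i ∈ Finset.range (N + 1), ∑ k ∈ Finset.range (N - i),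
        (-1 : ℚ) ^ (i + 1) • (ι (A (k + 1)) * G i (N - i - 1 - k))
      = -∑ k ∈ Finset.range N, ι (A (k + 1)) * Fsum ι astar S1 a (N - 1 - k) := by
    rw [hdrop, tri_swap, ← Finset.sum_neg_distrib]
    refine Finset.sum_congr rfl fun k hk => ?_
    have hk' : k < N := Finset.mem_range.mp hk
    have hfold : Fsum ι astar S1 a (N - 1 - k)
        = ∑ i ∈ Finset.range (N - k), (-1 : ℚ) ^ i • G i (N - 1 - k - i) := by
      rw [hFsum, show N - 1 - k + 1 = N - k from by omega]
    rw [hfold, Finset.mul_sum, ← Finset.sum_neg_distrib]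
    refine Finset.sum_congr rfl fun i _ => ?_
    rw [show N - i - 1 - k = N - 1 - k - i from by omega, pow_succ, mul_neg_one, neg_smul,
      mul_smul_comm]
  -- the S1 ((ι a)^(N+1)) term
  have hG0 : S1 ((ι a) ^ (N + 1))
      = ∑ k ∈ Finset.range N, ι (A k) * S1 ((ι a) ^ (N - k))
        + ι (A N) * Fsum ι astar S1 a 0 := by
    rw [S_decomp ι circ act S1 a hcomm hact_one hact_rec hS_one hS_rec N,
      Finset.sum_range_succ, Nat.sub_self, pow_zero, hS_one, hF0]
    simp only [hAdef]
  -- the key reindexing identity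
  have hkey : ∑ k ∈ Finset.range (N + 1), ι (A k) * Fsum ι astar S1 a (N - k)
      = ∑ k ∈ Finset.range N, ι (A (k + 1)) * Fsum ι astar S1 a (N - 1 - k)
        + ι a * Fsum ι astar S1 a N := by
    rw [Finset.sum_range_succ' (fun k => ι (A k) * Fsum ι astar S1 a (N - k)) N]
    congr 1
    · exact Finset.sum_congr rfl fun k _ => by
        rw [show N - (k + 1) = N - 1 - k from by omega]
    · rw [Nat.sub_zero, hAdef]
      norm_num [circPow]
  have hsplitlast : ∑ k ∈ Finset.range (N + 1), ι (A k) * Fsum ι astar S1 a (N - k)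
      = ∑ k ∈ Finset.range N, ι (A k) * Fsum ι astar S1 a (N - k)
        + ι (A N) * Fsum ι astar S1 a 0 := by
    rw [Finset.sum_range_succ, Nat.sub_self]
  have h1 : ∑ k ∈ Finset.range N, ι (A (k + 1)) * Fsum ι astar S1 a (N - 1 - k)
      = ∑ k ∈ Finset.range (N + 1), ι (A k) * Fsum ι astar S1 a (N - k)
        - ι a * Fsum ι astar S1 a N := by
    rw [hkey]; abel
  rw [step2, hT1, hT2, hT3, hG0]
  simp only [mul_sub, Finset.sum_sub_distrib]
  rw [h1, hsplitlast]
  abel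

end Aux

theorem alternating_star_sum_eq_zero
    {Z H : Type*} [AddCommGroup Z] [Module ℚ Z] [Ring H] [Algebra ℚ H]
    (ι : Z →ₗ[ℚ] H)
    (circ : Z →ₗ[ℚ] Z →ₗ[ℚ] Z)
    (hcomm : ∀ a b : Z, circ a b = circ b a)
    (hassoc : ∀ a b c : Z, circ (circ a b) c = circ a (circ b c))
    (astar : H →ₗ[ℚ] H →ₗ[ℚ] H)
    (hstar_one_left : ∀ w : H, astar 1 w = w)
    (hstar_one_right : ∀ w : H, astar w 1 = w)
    (hstar_rec : ∀ (a b : Z) (w₁ w₂ : H),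
      astar (ι a * w₁) (ι b * w₂) =
        ι a * astar w₁ (ι b * w₂) + ι b * astar (ι a * w₁) w₂ + ι (circ a b) * astar w₁ w₂)
    (act : Z →ₗ[ℚ] H →ₗ[ℚ] H)
    (hact_one : ∀ a : Z, act a 1 = 0)
    (hact_rec : ∀ (a b : Z) (w : H), act a (ι b * w) = ι (circ a b) * w)
    (S : ℚ → H →ₗ[ℚ] H)
    (hS_one : ∀ r : ℚ, S r 1 = 1)
    (hS_rec : ∀ (r : ℚ) (a : Z) (w : H), S r (ι a * w) = ι a * S r w + r • act a (S r w))
    (a : Z) (n : ℕ) (hn : 1 ≤ n) :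
    ∑ i ∈ Finset.range (n + 1),
        (-1 : ℚ) ^ i • astar ((ι a) ^ i) (S 1 ((ι a) ^ (n - i))) = 0 := by
  obtain ⟨N, rfl⟩ : ∃ N, n = N + 1 := ⟨n - 1, by omega⟩
  have hS_rec' : ∀ w : H, S 1 (ι a * w) = ι a * S 1 w + act a (S 1 w) := by
    intro w
    rw [hS_rec, one_smul]
  exact F_zero ι circ act astar (S 1) a hcomm hstar_one_left hstar_one_right hstar_rec
    (hact_one a) (hact_rec a) (hS_one 1) hS_rec' N
end

section
/- In the harmonic algebra setting, for any a₁, a₂ ∈ 𝔷 and any positive integer p, S(a₁^p a₂) = sum over i from 0 to p of (-1)^i * (a₂ a₁^i ∗ S(a₁^(p-i))), where S = S^1 and ∗ is the harmonic product. -/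
private lemma sum_range_tri {M : Type*} [AddCommMonoid M] (n : ℕ) (f : ℕ → ℕ → M) :
    ∑ i ∈ Finset.range n, ∑ j ∈ Finset.range (n - i), f i j
      = ∑ j ∈ Finset.range n, ∑ i ∈ Finset.range (n - j), f i j := by
  have key : ∀ (m : ℕ), m ≤ n → ∀ g : ℕ → M,
      ∑ j ∈ Finset.range m, g j = ∑ j ∈ Finset.range n, if j < m then g j else 0 := by
    intro m hm g
    rw [← Finset.sum_filter]
    apply Finset.sum_congr
    · ext j
      simp only [Finset.mem_filter, Finset.mem_range]
      omega
    · intro _ _; rfl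
  calc ∑ i ∈ Finset.range n, ∑ j ∈ Finset.range (n - i), f i j
      = ∑ i ∈ Finset.range n, ∑ j ∈ Finset.range n, if j < n - i then f i j else 0 :=
        Finset.sum_congr rfl fun i _ => key _ (Nat.sub_le _ _) _
    _ = ∑ j ∈ Finset.range n, ∑ i ∈ Finset.range n, if j < n - i then f i j else 0 :=
        Finset.sum_comm
    _ = ∑ j ∈ Finset.range n, ∑ i ∈ Finset.range n, if i < n - j then f i j else 0 := by
        refine Finset.sum_congr rfl fun j _ => Finset.sum_congr rfl fun i _ => ?_
        have h : (j < n - i) ↔ (i < n - j) := by omega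
        simp only [h]
    _ = ∑ j ∈ Finset.range n, ∑ i ∈ Finset.range (n - j), f i j :=
        Finset.sum_congr rfl fun j _ => (key _ (Nat.sub_le _ _) _).symm


theorem S_pow_mul_right
    {Z H : Type*} [AddCommGroup Z] [Module ℚ Z] [Ring H] [Algebra ℚ H]
    (ι : Z →ₗ[ℚ] H)
    (circ : Z →ₗ[ℚ] Z →ₗ[ℚ] Z)
    (hcomm : ∀ a b : Z, circ a b = circ b a)
    (hassoc : ∀ a b c : Z, circ (circ a b) c = circ a (circ b c))
    (astar : H →ₗ[ℚ] H →ₗ[ℚ] H)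
    (hstar_one_left : ∀ w : H, astar 1 w = w)
    (hstar_one_right : ∀ w : H, astar w 1 = w)
    (hstar_rec : ∀ (a b : Z) (w₁ w₂ : H),
      astar (ι a * w₁) (ι b * w₂) =
        ι a * astar w₁ (ι b * w₂) + ι b * astar (ι a * w₁) w₂ + ι (circ a b) * astar w₁ w₂)
    (act : Z →ₗ[ℚ] H →ₗ[ℚ] H)
    (hact_one : ∀ a : Z, act a 1 = 0)
    (hact_rec : ∀ (a b : Z) (w : H), act a (ι b * w) = ι (circ a b) * w)
    (S : ℚ → H →ₗ[ℚ] H)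
    (hS_one : ∀ r : ℚ, S r 1 = 1)
    (hS_rec : ∀ (r : ℚ) (a : Z) (w : H), S r (ι a * w) = ι a * S r w + r • act a (S r w))
    (a₁ a₂ : Z) (p : ℕ) (hp : 1 ≤ p) :
    S 1 ((ι a₁) ^ p * ι a₂) =
      ∑ i ∈ Finset.range (p + 1),
        (-1 : ℚ) ^ i • astar (ι a₂ * (ι a₁) ^ i) (S 1 ((ι a₁) ^ (p - i))) := by
  have hSrec1 : ∀ (a : Z) (w : H), S 1 (ι a * w) = ι a * S 1 w + act a (S 1 w) := by
    intro a w; rw [hS_rec, one_smul]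
  have hSletter : ∀ a : Z, S 1 (ι a) = ι a := by
    intro a
    have h := hSrec1 a 1
    rw [mul_one] at h
    rw [h, hS_one, mul_one, hact_one, add_zero]
  set x : H := ι a₁ with hx
  set C : ℕ → Z := circPow (fun u v => circ u v) a₁ with hCdef
  have hC0 : C 0 = a₁ := rfl
  have hCa : ∀ j, circ a₁ (C j) = C (j + 1) := fun j => by rw [hcomm]; rfl
  -- L1
  have L1 : ∀ k, S 1 (x ^ (k + 1)) = ∑ j ∈ Finset.range (k + 1), ι (C j) * S 1 (x ^ (k - j)) := by
    intro k
    induction k with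
    | zero =>
      rw [zero_add, pow_one, Finset.sum_range_one, hC0, Nat.zero_sub, pow_zero, hS_one, mul_one,
        hSletter]
    | succ k IHk =>
      have step1 : S 1 (x ^ (k + 1 + 1)) = ι a₁ * S 1 (x ^ (k + 1)) + act a₁ (S 1 (x ^ (k + 1))) := by
        rw [pow_succ' x (k + 1)]
        exact hSrec1 a₁ (x ^ (k + 1))
      rw [step1, Finset.sum_range_succ']
      have h2 : act a₁ (S 1 (x ^ (k + 1)))
          = ∑ j ∈ Finset.range (k + 1), ι (C (j + 1)) * S 1 (x ^ (k - j)) := by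
        rw [IHk, map_sum]
        exact Finset.sum_congr rfl fun j _ => by rw [hact_rec, hCa]
      rw [h2, add_comm, hC0, Nat.sub_zero]
      simp only [Nat.add_sub_add_right]
  -- L2
  have L2 : ∀ i k, astar (x ^ (i + 1)) (S 1 (x ^ k))
      = ι a₁ * astar (x ^ i) (S 1 (x ^ k))
        + ∑ j ∈ Finset.range k,
            (ι (C j) * astar (x ^ (i + 1)) (S 1 (x ^ (k - 1 - j)))
              + ι (C (j + 1)) * astar (x ^ i) (S 1 (x ^ (k - 1 - j)))) := by
    intro i k
    cases k with
    | zero =>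
      simp only [pow_zero, hS_one, hstar_one_right, Finset.range_zero, Finset.sum_empty, add_zero]
      rw [pow_succ' x i]
    | succ k =>
      have hXsucc : x ^ (i + 1) = ι a₁ * x ^ i := pow_succ' x i
      calc astar (x ^ (i + 1)) (S 1 (x ^ (k + 1)))
          = ∑ j ∈ Finset.range (k + 1),
              astar (ι a₁ * x ^ i) (ι (C j) * S 1 (x ^ (k - j))) := by
            rw [L1 k, map_sum, hXsucc]
        _ = ∑ j ∈ Finset.range (k + 1),
              (ι a₁ * astar (x ^ i) (ι (C j) * S 1 (x ^ (k - j)))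
                + (ι (C j) * astar (x ^ (i + 1)) (S 1 (x ^ (k - j)))
                  + ι (C (j + 1)) * astar (x ^ i) (S 1 (x ^ (k - j))))) := by
            refine Finset.sum_congr rfl fun j _ => ?_
            rw [hstar_rec, hCa, hXsucc, add_assoc]
        _ = ι a₁ * astar (x ^ i) (S 1 (x ^ (k + 1)))
            + ∑ j ∈ Finset.range (k + 1),
                (ι (C j) * astar (x ^ (i + 1)) (S 1 (x ^ (k + 1 - 1 - j)))
                  + ι (C (j + 1)) * astar (x ^ i) (S 1 (x ^ (k + 1 - 1 - j)))) := by
            rw [Finset.sum_add_distrib, ← Finset.mul_sum, ← map_sum, ← L1 k]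
            simp only [Nat.add_sub_cancel]
  -- L3
  have L3 : ∀ i k, astar (ι a₂ * x ^ i) (S 1 (x ^ k))
      = ι a₂ * astar (x ^ i) (S 1 (x ^ k))
        + ∑ j ∈ Finset.range k,
            (ι (C j) * astar (ι a₂ * x ^ i) (S 1 (x ^ (k - 1 - j)))
              + ι (circ a₂ (C j)) * astar (x ^ i) (S 1 (x ^ (k - 1 - j)))) := by
    intro i k
    cases k with
    | zero =>
      simp only [pow_zero, hS_one, hstar_one_right, Finset.range_zero, Finset.sum_empty, add_zero]
    | succ k =>
      calc astar (ι a₂ * x ^ i) (S 1 (x ^ (k + 1)))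
          = ∑ j ∈ Finset.range (k + 1),
              astar (ι a₂ * x ^ i) (ι (C j) * S 1 (x ^ (k - j))) := by
            rw [L1 k, map_sum]
        _ = ∑ j ∈ Finset.range (k + 1),
              (ι a₂ * astar (x ^ i) (ι (C j) * S 1 (x ^ (k - j)))
                + (ι (C j) * astar (ι a₂ * x ^ i) (S 1 (x ^ (k - j)))
                  + ι (circ a₂ (C j)) * astar (x ^ i) (S 1 (x ^ (k - j))))) := by
            refine Finset.sum_congr rfl fun j _ => ?_
            rw [hstar_rec, add_assoc]
        _ = ι a₂ * astar (x ^ i) (S 1 (x ^ (k + 1)))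
            + ∑ j ∈ Finset.range (k + 1),
                (ι (C j) * astar (ι a₂ * x ^ i) (S 1 (x ^ (k + 1 - 1 - j)))
                  + ι (circ a₂ (C j)) * astar (x ^ i) (S 1 (x ^ (k + 1 - 1 - j)))) := by
            rw [Finset.sum_add_distrib, ← Finset.mul_sum, ← map_sum, ← L1 k]
            simp only [Nat.add_sub_cancel]
  -- L4
  have L4 : ∀ p, (∑ i ∈ Finset.range (p + 1), ((-1 : ℚ)) ^ i • astar (x ^ i) (S 1 (x ^ (p - i))))
      = if p = 0 then 1 else 0 := by
    intro p
    induction p using Nat.strong_induction_on with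
    | _ p IH =>
      match p with
      | 0 => simp [hS_one, hstar_one_left]
      | (q + 1) =>
        rw [if_neg q.succ_ne_zero, Finset.sum_range_succ']
        simp only [Nat.add_sub_add_right, Nat.sub_zero, pow_zero, one_smul]
        rw [hstar_one_left]
        have e1 : ∀ i ∈ Finset.range (q + 1),
            ((-1 : ℚ)) ^ (i + 1) • astar (x ^ (i + 1)) (S 1 (x ^ (q - i)))
              = ((-1 : ℚ)) ^ (i + 1) • (ι a₁ * astar (x ^ i) (S 1 (x ^ (q - i))))
                + (∑ j ∈ Finset.range (q - i),
                    (((-1 : ℚ)) ^ (i + 1) • (ι (C j) * astar (x ^ (i + 1)) (S 1 (x ^ (q - i - 1 - j))))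
                      + ((-1 : ℚ)) ^ (i + 1) • (ι (C (j + 1)) * astar (x ^ i) (S 1 (x ^ (q - i - 1 - j)))))) := by
          intro i _
          rw [L2 i (q - i), smul_add, Finset.smul_sum]
          exact congrArg _ (Finset.sum_congr rfl fun j _ => smul_add _ _ _)
        rw [Finset.sum_congr rfl e1, Finset.sum_add_distrib]
        rw [Finset.sum_congr rfl (fun (i : ℕ) (_ : i ∈ Finset.range (q + 1)) =>
          (Finset.sum_add_distrib (s := Finset.range (q - i)))), Finset.sum_add_distrib]
        -- SA
        have hSA : ∑ i ∈ Finset.range (q + 1),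
              ((-1 : ℚ)) ^ (i + 1) • (ι a₁ * astar (x ^ i) (S 1 (x ^ (q - i))))
            = -(ι a₁ * (if q = 0 then (1 : H) else 0)) := by
          rw [← IH q (Nat.lt_succ_self q), Finset.mul_sum, ← Finset.sum_neg_distrib]
          refine Finset.sum_congr rfl fun i _ => ?_
          rw [pow_succ, mul_neg_one, neg_smul, mul_smul_comm]
        -- SB
        have hSB : ∑ i ∈ Finset.range (q + 1), ∑ j ∈ Finset.range (q - i),
              ((-1 : ℚ)) ^ (i + 1) • (ι (C j) * astar (x ^ (i + 1)) (S 1 (x ^ (q - i - 1 - j))))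
            = ∑ j ∈ Finset.range q, ι (C j) * -(S 1 (x ^ (q - j))) := by
          rw [Finset.sum_range_succ]
          simp only [Nat.sub_self, Finset.range_zero, Finset.sum_empty, add_zero]
          rw [sum_range_tri]
          refine Finset.sum_congr rfl fun j hj => ?_
          have hj' : j < q := Finset.mem_range.mp hj
          have hP := IH (q - 1 - j + 1) (by omega)
          rw [if_neg (Nat.succ_ne_zero _), Finset.sum_range_succ'] at hP
          simp only [Nat.add_sub_add_right, Nat.sub_zero, pow_zero, one_smul] at hP
          rw [hstar_one_left] at hP
          have hq : q - j = q - 1 - j + 1 := by omega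
          rw [hq]
          calc ∑ i ∈ Finset.range (q - 1 - j + 1),
                ((-1 : ℚ)) ^ (i + 1) • (ι (C j) * astar (x ^ (i + 1)) (S 1 (x ^ (q - i - 1 - j))))
              = ι (C j) * ∑ i ∈ Finset.range (q - 1 - j + 1),
                  ((-1 : ℚ)) ^ (i + 1) • astar (x ^ (i + 1)) (S 1 (x ^ (q - 1 - j - i))) := by
                rw [Finset.mul_sum]
                refine Finset.sum_congr rfl fun i _ => ?_
                rw [show q - i - 1 - j = q - 1 - j - i by omega, mul_smul_comm]
            _ = ι (C j) * -(S 1 (x ^ (q - 1 - j + 1))) := by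
                rw [eq_neg_of_add_eq_zero_left hP]
        -- SC
        have hSC : ∑ i ∈ Finset.range (q + 1), ∑ j ∈ Finset.range (q - i),
              ((-1 : ℚ)) ^ (i + 1) • (ι (C (j + 1)) * astar (x ^ i) (S 1 (x ^ (q - i - 1 - j))))
            = ∑ j ∈ Finset.range q, -(ι (C (j + 1)) * (if q - 1 - j = 0 then (1 : H) else 0)) := by
          rw [Finset.sum_range_succ]
          simp only [Nat.sub_self, Finset.range_zero, Finset.sum_empty, add_zero]
          rw [sum_range_tri]
          refine Finset.sum_congr rfl fun j hj => ?_
          have hj' : j < q := Finset.mem_range.mp hj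
          have hP := IH (q - 1 - j) (by omega)
          have hq : q - j = q - 1 - j + 1 := by omega
          rw [hq]
          calc ∑ i ∈ Finset.range (q - 1 - j + 1),
                ((-1 : ℚ)) ^ (i + 1) • (ι (C (j + 1)) * astar (x ^ i) (S 1 (x ^ (q - i - 1 - j))))
              = -(ι (C (j + 1)) * ∑ i ∈ Finset.range (q - 1 - j + 1),
                  ((-1 : ℚ)) ^ i • astar (x ^ i) (S 1 (x ^ (q - 1 - j - i)))) := by
                rw [Finset.mul_sum, ← Finset.sum_neg_distrib]
                refine Finset.sum_congr rfl fun i _ => ?_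
                rw [show q - i - 1 - j = q - 1 - j - i by omega, pow_succ, mul_neg_one, neg_smul,
                  mul_smul_comm]
            _ = -(ι (C (j + 1)) * (if q - 1 - j = 0 then (1 : H) else 0)) := by rw [hP]
        rw [hSA, hSB, hSC]
        -- final assembly
        have hL1q : S 1 (x ^ (q + 1))
            = ∑ j ∈ Finset.range q, ι (C j) * S 1 (x ^ (q - j)) + ι (C q) := by
          rw [L1 q, Finset.sum_range_succ, Nat.sub_self, pow_zero, hS_one, mul_one]
        rw [hL1q]
        have hcomb : ∑ j ∈ Finset.range q, ι (C j) * -(S 1 (x ^ (q - j)))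
            = -∑ j ∈ Finset.range q, ι (C j) * S 1 (x ^ (q - j)) := by
          rw [← Finset.sum_neg_distrib]
          exact Finset.sum_congr rfl fun j _ => mul_neg _ _
        rw [hcomb]
        have hSCval : ∑ j ∈ Finset.range q, -(ι (C (j + 1)) * (if q - 1 - j = 0 then (1 : H) else 0))
            = -(if q = 0 then 0 else ι (C q)) := by
          rcases Nat.eq_zero_or_pos q with hq0 | hqpos
          · subst hq0; simp
          · rw [if_neg (by omega)]
            rw [Finset.sum_eq_single_of_mem (q - 1)
              (Finset.mem_range.mpr (by omega))
              (fun j hjm hne => by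
                have := Finset.mem_range.mp hjm
                rw [if_neg (by omega), mul_zero, neg_zero])]
            rw [if_pos (by omega), mul_one, show q - 1 + 1 = q by omega]
        rw [hSCval]
        rcases Nat.eq_zero_or_pos q with hq0 | hqpos
        · subst hq0
          simp [hC0]
        · rw [if_neg (by omega), if_neg (by omega)]
          simp only [mul_zero, neg_zero, zero_add]
          abel
  -- L5
  have hactletter : ∀ a c : Z, act a (ι c) = ι (circ a c) := by
    intro a c
    have h := hact_rec a c 1
    rwa [mul_one, mul_one] at h
  have L5 : ∀ q, (∑ i ∈ Finset.range (q + 1 + 1),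
        ((-1 : ℚ)) ^ i • astar (ι a₂ * x ^ i) (S 1 (x ^ (q + 1 - i))))
      = ∑ j ∈ Finset.range (q + 1), ι (C j) *
          (∑ i ∈ Finset.range (q - j + 1),
            ((-1 : ℚ)) ^ i • astar (ι a₂ * x ^ i) (S 1 (x ^ (q - j - i))))
        + ι (circ a₂ (C q)) := by
    intro q
    have e1 : ∀ i ∈ Finset.range (q + 1 + 1),
        ((-1 : ℚ)) ^ i • astar (ι a₂ * x ^ i) (S 1 (x ^ (q + 1 - i)))
          = ((-1 : ℚ)) ^ i • (ι a₂ * astar (x ^ i) (S 1 (x ^ (q + 1 - i))))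
            + (∑ j ∈ Finset.range (q + 1 - i),
                (((-1 : ℚ)) ^ i • (ι (C j) * astar (ι a₂ * x ^ i) (S 1 (x ^ (q + 1 - i - 1 - j))))
                  + ((-1 : ℚ)) ^ i • (ι (circ a₂ (C j)) * astar (x ^ i) (S 1 (x ^ (q + 1 - i - 1 - j)))))) := by
      intro i _
      rw [L3 i (q + 1 - i), smul_add, Finset.smul_sum]
      exact congrArg _ (Finset.sum_congr rfl fun j _ => smul_add _ _ _)
    rw [Finset.sum_congr rfl e1, Finset.sum_add_distrib]
    rw [Finset.sum_congr rfl (fun (i : ℕ) (_ : i ∈ Finset.range (q + 1 + 1)) =>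
      (Finset.sum_add_distrib (s := Finset.range (q + 1 - i)))), Finset.sum_add_distrib]
    have hTA : ∑ i ∈ Finset.range (q + 1 + 1),
          ((-1 : ℚ)) ^ i • (ι a₂ * astar (x ^ i) (S 1 (x ^ (q + 1 - i)))) = 0 := by
      have : ∑ i ∈ Finset.range (q + 1 + 1),
          ((-1 : ℚ)) ^ i • (ι a₂ * astar (x ^ i) (S 1 (x ^ (q + 1 - i))))
          = ι a₂ * ∑ i ∈ Finset.range (q + 1 + 1),
              ((-1 : ℚ)) ^ i • astar (x ^ i) (S 1 (x ^ (q + 1 - i))) := by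
        rw [Finset.mul_sum]
        exact Finset.sum_congr rfl fun i _ => (mul_smul_comm _ _ _).symm
      rw [this, L4 (q + 1), if_neg q.succ_ne_zero, mul_zero]
    have hTB : ∑ i ∈ Finset.range (q + 1 + 1), ∑ j ∈ Finset.range (q + 1 - i),
          ((-1 : ℚ)) ^ i • (ι (C j) * astar (ι a₂ * x ^ i) (S 1 (x ^ (q + 1 - i - 1 - j))))
        = ∑ j ∈ Finset.range (q + 1), ι (C j) *
            (∑ i ∈ Finset.range (q - j + 1),
              ((-1 : ℚ)) ^ i • astar (ι a₂ * x ^ i) (S 1 (x ^ (q - j - i)))) := by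
      rw [Finset.sum_range_succ]
      simp only [Nat.sub_self, Finset.range_zero, Finset.sum_empty, add_zero]
      rw [sum_range_tri]
      refine Finset.sum_congr rfl fun j hj => ?_
      have hj' : j < q + 1 := Finset.mem_range.mp hj
      rw [show q + 1 - j = q - j + 1 by omega, Finset.mul_sum]
      refine Finset.sum_congr rfl fun i _ => ?_
      rw [show q + 1 - i - 1 - j = q - j - i by omega, mul_smul_comm]
    have hTC : ∑ i ∈ Finset.range (q + 1 + 1), ∑ j ∈ Finset.range (q + 1 - i),
          ((-1 : ℚ)) ^ i • (ι (circ a₂ (C j)) * astar (x ^ i) (S 1 (x ^ (q + 1 - i - 1 - j))))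
        = ι (circ a₂ (C q)) := by
      rw [Finset.sum_range_succ]
      simp only [Nat.sub_self, Finset.range_zero, Finset.sum_empty, add_zero]
      rw [sum_range_tri]
      have inner : ∀ j ∈ Finset.range (q + 1),
          (∑ i ∈ Finset.range (q + 1 - j),
            ((-1 : ℚ)) ^ i • (ι (circ a₂ (C j)) * astar (x ^ i) (S 1 (x ^ (q + 1 - i - 1 - j)))))
          = ι (circ a₂ (C j)) * (if q - j = 0 then (1 : H) else 0) := by
        intro j hj
        have hj' : j < q + 1 := Finset.mem_range.mp hj
        rw [← L4 (q - j), show q + 1 - j = q - j + 1 by omega, Finset.mul_sum]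
        refine Finset.sum_congr rfl fun i _ => ?_
        rw [show q + 1 - i - 1 - j = q - j - i by omega, mul_smul_comm]
      rw [Finset.sum_congr rfl inner]
      rw [Finset.sum_eq_single_of_mem q (Finset.mem_range.mpr (Nat.lt_succ_self q))
        (fun j hjm hne => by
          have := Finset.mem_range.mp hjm
          rw [if_neg (by omega), mul_zero])]
      rw [Nat.sub_self, if_pos rfl, mul_one]
    rw [hTA, hTB, hTC, zero_add]
  -- L6
  have L6 : ∀ q, S 1 (x ^ (q + 1) * ι a₂)
      = ∑ j ∈ Finset.range (q + 1), ι (C j) * S 1 (x ^ (q - j) * ι a₂)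
        + ι (circ (C q) a₂) := by
    intro q
    induction q with
    | zero =>
      rw [zero_add, pow_one, Finset.sum_range_one, hC0, Nat.zero_sub, pow_zero, one_mul,
        hSrec1, hSletter, hactletter]
    | succ q IHq =>
      have step1 : S 1 (x ^ (q + 1 + 1) * ι a₂)
          = ι a₁ * S 1 (x ^ (q + 1) * ι a₂) + act a₁ (S 1 (x ^ (q + 1) * ι a₂)) := by
        rw [pow_succ' x (q + 1), mul_assoc]
        exact hSrec1 a₁ (x ^ (q + 1) * ι a₂)
      rw [step1, IHq, map_add, map_sum]
      have h2 : ∀ j ∈ Finset.range (q + 1),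
          act a₁ (ι (C j) * S 1 (x ^ (q - j) * ι a₂))
            = ι (C (j + 1)) * S 1 (x ^ (q - j) * ι a₂) := by
        intro j _
        rw [hact_rec, hCa]
      rw [Finset.sum_congr rfl h2, hactletter, ← hassoc, hCa]
      rw [Finset.sum_range_succ' (fun j => ι (C j) * S 1 (x ^ (q + 1 - j) * ι a₂)) (q + 1)]
      simp only [Nat.add_sub_add_right, Nat.sub_zero, hC0]
      have hre : ι a₁ * (∑ j ∈ Finset.range (q + 1), ι (C j) * S 1 (x ^ (q - j) * ι a₂)
            + ι (circ (C q) a₂))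
          = ι a₁ * S 1 (x ^ (q + 1) * ι a₂) := by
        rw [← IHq]
      rw [hre]
      abel
  -- L7
  have L7 : ∀ p, (∑ i ∈ Finset.range (p + 1),
        ((-1 : ℚ)) ^ i • astar (ι a₂ * x ^ i) (S 1 (x ^ (p - i))))
      = S 1 (x ^ p * ι a₂) := by
    intro p
    induction p using Nat.strong_induction_on with
    | _ p IH =>
      match p with
      | 0 => simp [hS_one, hstar_one_right, hSletter]
      | (q + 1) =>
        rw [L5 q, L6 q]
        congr 1
        · refine Finset.sum_congr rfl fun j hj => ?_
          rw [IH (q - j) (by have := Finset.mem_range.mp hj; omega)]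
        · exact congrArg ι (hcomm _ _)
  exact (L7 p).symm
end

section
/- In the harmonic algebra setting, for any a₁, a₂ ∈ 𝔷 and any positive integer q, S(a₁ a₂^q) = sum over i from 0 to q of (-1)^i * (a₂^i a₁ ∗ S(a₂^(q-i))), where S = S^1 and ∗ is the harmonic product. -/
section Aux

variable {Z H : Type*} [AddCommGroup Z] [Module ℚ Z] [Ring H] [Algebra ℚ H]

inductive Adm (ι : Z →ₗ[ℚ] H) : H → Prop
  | one : Adm ι 1
  | mul (c : Z) {w : H} : Adm ι w → Adm ι (ι c * w)
  | zero : Adm ι 0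
  | add {u v : H} : Adm ι u → Adm ι v → Adm ι (u + v)
  | smul (r : ℚ) {v : H} : Adm ι v → Adm ι (r • v)

lemma adm_act (ι : Z →ₗ[ℚ] H) (circ : Z →ₗ[ℚ] Z →ₗ[ℚ] Z) (act : Z →ₗ[ℚ] H →ₗ[ℚ] H)
    (hact_one : ∀ a : Z, act a 1 = 0)
    (hact_rec : ∀ (a b : Z) (w : H), act a (ι b * w) = ι (circ a b) * w)
    (a : Z) {v : H} (hv : Adm ι v) : Adm ι (act a v) := by
  induction hv with
  | one => rw [hact_one]; exact Adm.zero
  | mul c hw ih => rw [hact_rec]; exact Adm.mul _ hw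
  | zero => rw [map_zero]; exact Adm.zero
  | add h1 h2 ih1 ih2 => rw [map_add]; exact Adm.add ih1 ih2
  | smul r h ih => rw [map_smul]; exact Adm.smul r ih

lemma act_comm_adm (ι : Z →ₗ[ℚ] H) (circ : Z →ₗ[ℚ] Z →ₗ[ℚ] Z)
    (hcomm : ∀ a b : Z, circ a b = circ b a)
    (hassoc : ∀ a b c : Z, circ (circ a b) c = circ a (circ b c))
    (act : Z →ₗ[ℚ] H →ₗ[ℚ] H)
    (hact_one : ∀ a : Z, act a 1 = 0)
    (hact_rec : ∀ (a b : Z) (w : H), act a (ι b * w) = ι (circ a b) * w)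
    (a b : Z) {v : H} (hv : Adm ι v) : act a (act b v) = act b (act a v) := by
  induction hv with
  | one => rw [hact_one, hact_one, map_zero, map_zero]
  | mul c hw ih =>
      rw [hact_rec, hact_rec, hact_rec, hact_rec]
      congr 2
      rw [← hassoc, hcomm a b, hassoc]
  | zero => simp
  | add h1 h2 ih1 ih2 => rw [map_add, map_add, map_add, map_add, ih1, ih2]
  | smul r h ih => rw [map_smul, map_smul, map_smul, map_smul, ih]

lemma star_L_adm (ι : Z →ₗ[ℚ] H) (circ : Z →ₗ[ℚ] Z →ₗ[ℚ] Z)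
    (hcomm : ∀ a b : Z, circ a b = circ b a)
    (hassoc : ∀ a b c : Z, circ (circ a b) c = circ a (circ b c))
    (astar : H →ₗ[ℚ] H →ₗ[ℚ] H)
    (hstar_one_right : ∀ w : H, astar w 1 = w)
    (hstar_rec : ∀ (a b : Z) (w₁ w₂ : H),
      astar (ι a * w₁) (ι b * w₂) =
        ι a * astar w₁ (ι b * w₂) + ι b * astar (ι a * w₁) w₂ + ι (circ a b) * astar w₁ w₂)
    (act : Z →ₗ[ℚ] H →ₗ[ℚ] H)
    (hact_one : ∀ a : Z, act a 1 = 0)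
    (hact_rec : ∀ (a b : Z) (w : H), act a (ι b * w) = ι (circ a b) * w)
    (a b : Z) (u : H) {v : H} (hv : Adm ι v) :
    astar (ι b * u) (ι a * v + act a v) =
      (ι a * astar (ι b * u) v + act a (astar (ι b * u) v))
        + ι b * astar u (ι a * v + act a v) := by
  induction hv with
  | one =>
      rw [hact_one, add_zero, hstar_rec b a u 1, hstar_one_right, hstar_one_right,
        hact_rec a b u, hcomm b a]
      abel
  | @mul c w hw ih =>
      rw [hact_rec a c w, map_add (astar (ι b * u)), map_add (astar u),
        hstar_rec b a u (ι c * w), hstar_rec b (circ a c) u w, hstar_rec b c u w,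
        map_add, map_add, hact_rec a b, hact_rec a c, hact_rec a (circ b c),
        hcomm b a,
        show circ b (circ a c) = circ a (circ b c) by rw [← hassoc, hcomm b a, hassoc]]
      simp only [mul_add]
      abel
  | zero => simp
  | @add x y h1 h2 ih1 ih2 =>
      calc astar (ι b * u) (ι a * (x + y) + act a (x + y))
          = astar (ι b * u) (ι a * x + act a x) + astar (ι b * u) (ι a * y + act a y) := by
            simp only [mul_add, map_add]; abel
        _ = (ι a * astar (ι b * u) x + act a (astar (ι b * u) x)
              + ι b * astar u (ι a * x + act a x))
            + (ι a * astar (ι b * u) y + act a (astar (ι b * u) y)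
              + ι b * astar u (ι a * y + act a y)) := by rw [ih1, ih2]
        _ = _ := by simp only [mul_add, map_add]; abel
  | @smul r x h ih =>
      calc astar (ι b * u) (ι a * (r • x) + act a (r • x))
          = r • astar (ι b * u) (ι a * x + act a x) := by
            simp only [mul_smul_comm, map_smul, map_add, smul_add]
        _ = r • (ι a * astar (ι b * u) x + act a (astar (ι b * u) x)
              + ι b * astar u (ι a * x + act a x)) := by rw [ih]
        _ = _ := by
            simp only [mul_add, mul_smul_comm, map_smul, map_add, smul_add]
            try abel

end Aux

set_option maxHeartbeats 1600000 in
theorem S_mul_pow_right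
    {Z H : Type*} [AddCommGroup Z] [Module ℚ Z] [Ring H] [Algebra ℚ H]
    (ι : Z →ₗ[ℚ] H)
    (circ : Z →ₗ[ℚ] Z →ₗ[ℚ] Z)
    (hcomm : ∀ a b : Z, circ a b = circ b a)
    (hassoc : ∀ a b c : Z, circ (circ a b) c = circ a (circ b c))
    (astar : H →ₗ[ℚ] H →ₗ[ℚ] H)
    (hstar_one_left : ∀ w : H, astar 1 w = w)
    (hstar_one_right : ∀ w : H, astar w 1 = w)
    (hstar_rec : ∀ (a b : Z) (w₁ w₂ : H),
      astar (ι a * w₁) (ι b * w₂) =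
        ι a * astar w₁ (ι b * w₂) + ι b * astar (ι a * w₁) w₂ + ι (circ a b) * astar w₁ w₂)
    (act : Z →ₗ[ℚ] H →ₗ[ℚ] H)
    (hact_one : ∀ a : Z, act a 1 = 0)
    (hact_rec : ∀ (a b : Z) (w : H), act a (ι b * w) = ι (circ a b) * w)
    (S : ℚ → H →ₗ[ℚ] H)
    (hS_one : ∀ r : ℚ, S r 1 = 1)
    (hS_rec : ∀ (r : ℚ) (a : Z) (w : H), S r (ι a * w) = ι a * S r w + r • act a (S r w))
    (a₁ a₂ : Z) (q : ℕ) (hq : 1 ≤ q) :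
    S 1 (ι a₁ * (ι a₂) ^ q) =
      ∑ i ∈ Finset.range (q + 1),
        (-1 : ℚ) ^ i • astar ((ι a₂) ^ i * ι a₁) (S 1 ((ι a₂) ^ (q - i))) := by
  clear hq
  have hSstep : ∀ m : ℕ, S 1 ((ι a₂) ^ (m+1))
      = ι a₂ * S 1 ((ι a₂)^m) + act a₂ (S 1 ((ι a₂)^m)) := by
    intro m; rw [pow_succ', hS_rec, one_smul]
  have hadm : ∀ m : ℕ, Adm ι (S 1 ((ι a₂)^m)) := by
    intro m
    induction m with
    | zero => rw [pow_zero, hS_one]; exact Adm.one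
    | succ m ihm =>
        rw [hSstep]
        exact Adm.add (Adm.mul _ ihm) (adm_act ι circ act hact_one hact_rec _ ihm)
  have hA : ∀ (b : Z) (u : H) (m : ℕ),
      astar (ι b * u) (S 1 ((ι a₂)^(m+1))) =
        (ι a₂ * astar (ι b * u) (S 1 ((ι a₂)^m))
            + act a₂ (astar (ι b * u) (S 1 ((ι a₂)^m))))
          + ι b * astar u (S 1 ((ι a₂)^(m+1))) := by
    intro b u m
    rw [hSstep m]
    exact star_L_adm ι circ hcomm hassoc astar hstar_one_right hstar_rec act hact_one
      hact_rec a₂ b u (hadm m)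
  have eZero : ∀ m : ℕ,
      astar (ι a₁ : H) (S 1 ((ι a₂)^(m+1))) =
        (ι a₂ * astar (ι a₁ : H) (S 1 ((ι a₂)^m))
            + act a₂ (astar (ι a₁ : H) (S 1 ((ι a₂)^m))))
          + ι a₁ * S 1 ((ι a₂)^(m+1)) := by
    intro m
    have h := hA a₁ 1 m
    rw [hstar_one_left, mul_one] at h
    exact h
  have eSucc : ∀ i m : ℕ,
      astar ((ι a₂)^(i+1) * ι a₁) (S 1 ((ι a₂)^(m+1))) =
        (ι a₂ * astar ((ι a₂)^(i+1) * ι a₁) (S 1 ((ι a₂)^m))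
            + act a₂ (astar ((ι a₂)^(i+1) * ι a₁) (S 1 ((ι a₂)^m))))
          + ι a₂ * astar ((ι a₂)^i * ι a₁) (S 1 ((ι a₂)^(m+1))) := by
    intro i m
    have h := hA a₂ ((ι a₂)^i * ι a₁) m
    rw [show (ι a₂ : H) * ((ι a₂)^i * ι a₁) = (ι a₂)^(i+1) * ι a₁ by
      rw [← mul_assoc, ← pow_succ']] at h
    exact h
  have eT0 : ∀ i : ℕ,
      astar ((ι a₂)^(i+1) * ι a₁) (S 1 ((ι a₂)^0))
        = ι a₂ * astar ((ι a₂)^i * ι a₁) (S 1 ((ι a₂)^0)) := by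
    intro i
    rw [pow_zero, hS_one, hstar_one_right, hstar_one_right, ← mul_assoc, ← pow_succ']
  induction q with
  | zero =>
      rw [Finset.sum_range_one]
      simp only [pow_zero, one_mul, one_smul, Nat.sub_zero, hS_one, hstar_one_right, mul_one]
      rw [← mul_one ((ι a₁ : H)), hS_rec, hS_one, hact_one, smul_zero, add_zero]
  | succ q ih =>
      have hfin : act a₁ (S 1 ((ι a₂)^(q+1))) = act a₂ (S 1 (ι a₁ * (ι a₂)^q)) := by
        rw [hSstep q, hS_rec, one_smul, map_add, map_add, hact_rec a₁ a₂, hact_rec a₂ a₁,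
          hcomm a₂ a₁, act_comm_adm ι circ hcomm hassoc act hact_one hact_rec a₁ a₂ (hadm q)]
      -- expand the right-hand sum
      rw [Finset.sum_range_succ']
      rw [Nat.sub_zero, pow_zero (-1:ℚ), one_smul, pow_zero ((ι a₂ : H)), one_mul, eZero q]
      rw [Finset.sum_range_succ]
      rw [show q + 1 - (q + 1) = 0 from Nat.sub_self _, eT0 q, pow_succ (-1:ℚ) q,
        mul_neg_one, neg_smul]
      have hterm : ∀ i ∈ Finset.range q,
          (-1:ℚ)^(i+1) • astar ((ι a₂)^(i+1) * ι a₁) (S 1 ((ι a₂)^(q+1-(i+1))))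
            = ((-1:ℚ)^(i+1) • (ι a₂ * astar ((ι a₂)^(i+1) * ι a₁) (S 1 ((ι a₂)^(q-(i+1)))))
                + (-1:ℚ)^(i+1) • act a₂ (astar ((ι a₂)^(i+1) * ι a₁) (S 1 ((ι a₂)^(q-(i+1))))))
              + -((-1:ℚ)^i • (ι a₂ * astar ((ι a₂)^i * ι a₁) (S 1 ((ι a₂)^(q-i))))) := by
        intro i hi
        have hi' := Finset.mem_range.mp hi
        have e1 : q + 1 - (i+1) = (q - (i+1)) + 1 := by omega
        have e2 : q - i = (q - (i+1)) + 1 := by omega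
        rw [e1, e2, eSucc i (q - (i+1)), smul_add, smul_add, pow_succ (-1:ℚ) i,
          mul_neg_one, neg_smul]
        simp only [neg_smul]
      rw [Finset.sum_congr rfl hterm, Finset.sum_add_distrib, Finset.sum_add_distrib]
      -- expand the left-hand side
      rw [hS_rec 1 a₁ ((ι a₂)^(q+1)), one_smul, hfin, ih, map_sum]
      simp only [map_smul]
      rw [Finset.sum_range_succ']
      -- telescoping identity for the ι a₂ parts
      have t1 := Finset.sum_range_succ'
        (fun i => (-1:ℚ)^i • ((ι a₂ : H) * astar ((ι a₂)^i * ι a₁) (S 1 ((ι a₂)^(q-i))))) q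
      have t2 := Finset.sum_range_succ
        (fun i => (-1:ℚ)^i • ((ι a₂ : H) * astar ((ι a₂)^i * ι a₁) (S 1 ((ι a₂)^(q-i))))) q
      simp only [Nat.sub_self, Nat.sub_zero, pow_zero, one_mul, one_smul, hS_one,
        hstar_one_right] at t1 t2
      have t3 : (∑ i ∈ Finset.range q,
            (-1:ℚ)^(i+1) • ((ι a₂ : H) * astar ((ι a₂)^(i+1) * ι a₁) (S 1 ((ι a₂)^(q-(i+1))))))
          = (∑ i ∈ Finset.range q,
              (-1:ℚ)^i • ((ι a₂ : H) * astar ((ι a₂)^i * ι a₁) (S 1 ((ι a₂)^(q-i)))))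
            + (-1:ℚ)^q • ((ι a₂ : H) * ((ι a₂)^q * ι a₁))
            - (ι a₂ : H) * astar (ι a₁ : H) (S 1 ((ι a₂)^q)) := by
        rw [eq_sub_iff_add_eq]
        exact t1.symm.trans t2
      rw [t3]
      simp only [Nat.sub_zero, Nat.sub_self, pow_zero, one_mul, one_smul, hS_one,
        hstar_one_right, Finset.sum_neg_distrib]
      abel
end

section
/- In the harmonic algebra setting, for any a₁, a₂ ∈ 𝔷 and any positive integer p, S^r(a₁^p a₂) = sum over pairs (i,j) of nonnegative integers with i+j ≤ p of (-1)^j * r^(p-i) * (1-r)^i * (a₁^i a₂ a₁^j ∗ S(a₁^(p-i-j))), where S = S^1 and r is a polynomial variable. -/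
theorem SrAux.triSwap {M : Type*} [AddCommMonoid M] (n : ℕ) (f : ℕ → ℕ → M) :
    ∑ j ∈ Finset.range n, ∑ k ∈ Finset.range (n - j), f j k
      = ∑ k ∈ Finset.range n, ∑ j ∈ Finset.range (n - k), f j k := by
  have key : ∀ g : ℕ → ℕ → M,
      ∑ j ∈ Finset.range n, ∑ k ∈ Finset.range (n - j), g j k
        = ∑ j ∈ Finset.range n, ∑ k ∈ Finset.range n, if j + k < n then g j k else 0 := by
    intro g
    refine Finset.sum_congr rfl fun j _ => ?_
    calc ∑ k ∈ Finset.range (n - j), g j k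
        = ∑ k ∈ Finset.range (n - j), if j + k < n then g j k else 0 :=
          Finset.sum_congr rfl fun k hk => by
            rw [if_pos]; simp only [Finset.mem_range] at hk; omega
      _ = ∑ k ∈ Finset.range n, if j + k < n then g j k else 0 :=
          Finset.sum_subset (Finset.range_subset_range.2 (Nat.sub_le n j))
            (fun k _ hk => by
              rw [if_neg]; simp only [Finset.mem_range] at hk; omega)
  rw [key f, key fun k j => f j k, Finset.sum_comm]
  exact Finset.sum_congr rfl fun j _ => Finset.sum_congr rfl fun k _ => by
    rw [Nat.add_comm]

namespace SrAux
variable {Z H : Type*} [AddCommGroup Z] [Module ℚ Z] [Ring H] [Algebra ℚ H]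
variable (ι : Z →ₗ[ℚ] H) (circ : Z →ₗ[ℚ] Z →ₗ[ℚ] Z)
variable (astar : H →ₗ[ℚ] H →ₗ[ℚ] H) (act : Z →ₗ[ℚ] H →ₗ[ℚ] H) (S : ℚ → H →ₗ[ℚ] H)
variable (a₁ a₂ : Z)

def zP : ℕ → Z := circPow (fun x y => circ x y) a₁

lemma zP_zero : zP circ a₁ 0 = a₁ := rfl

lemma zP_succ (k : ℕ) : zP circ a₁ (k + 1) = circ (zP circ a₁ k) a₁ := rfl

lemma circ_zP (hcomm : ∀ a b : Z, circ a b = circ b a) (k : ℕ) :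
    circ a₁ (zP circ a₁ k) = zP circ a₁ (k + 1) := by
  rw [zP_succ, hcomm]

lemma circ_zP' (hcomm : ∀ a b : Z, circ a b = circ b a)
    (hassoc : ∀ a b c : Z, circ (circ a b) c = circ a (circ b c)) (c : Z) (k : ℕ) :
    circ c (zP circ a₁ (k + 1)) = circ a₁ (circ c (zP circ a₁ k)) := by
  rw [← circ_zP circ a₁ hcomm, ← hassoc, hcomm c a₁, hassoc]

lemma u_succ (hS_rec : ∀ (r : ℚ) (a : Z) (w : H), S r (ι a * w) = ι a * S r w + r • act a (S r w))
    (m : ℕ) :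
    S 1 ((ι a₁) ^ (m + 1)) = ι a₁ * S 1 ((ι a₁) ^ m) + act a₁ (S 1 ((ι a₁) ^ m)) := by
  rw [pow_succ', hS_rec, one_smul]

lemma u_eq (hcomm : ∀ a b : Z, circ a b = circ b a)
    (hact_one : ∀ a : Z, act a 1 = 0)
    (hact_rec : ∀ (a b : Z) (w : H), act a (ι b * w) = ι (circ a b) * w)
    (hS_one : ∀ r : ℚ, S r 1 = 1)
    (hS_rec : ∀ (r : ℚ) (a : Z) (w : H), S r (ι a * w) = ι a * S r w + r • act a (S r w))
    (m : ℕ) :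
    S 1 ((ι a₁) ^ (m + 1))
      = ∑ k ∈ Finset.range (m + 1), ι (zP circ a₁ k) * S 1 ((ι a₁) ^ (m - k)) := by
  induction m with
  | zero =>
      rw [Finset.sum_range_one, u_succ ι act S a₁ hS_rec 0]
      simp [hS_one, hact_one, zP_zero]
  | succ m ih =>
      calc S 1 ((ι a₁) ^ (m + 2))
          = ι a₁ * S 1 ((ι a₁) ^ (m + 1)) + act a₁ (S 1 ((ι a₁) ^ (m + 1))) :=
            u_succ ι act S a₁ hS_rec (m + 1)
        _ = ι a₁ * S 1 ((ι a₁) ^ (m + 1))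
              + ∑ k ∈ Finset.range (m + 1), ι (zP circ a₁ (k + 1)) * S 1 ((ι a₁) ^ (m - k)) := by
            congr 1
            rw [ih, map_sum]
            exact Finset.sum_congr rfl fun k _ => by
              rw [hact_rec, circ_zP circ a₁ hcomm]
        _ = ∑ k ∈ Finset.range (m + 2), ι (zP circ a₁ k) * S 1 ((ι a₁) ^ (m + 1 - k)) := by
            conv_rhs => rw [Finset.sum_range_succ']
            simp only [Nat.succ_sub_succ_eq_sub, Nat.sub_zero, zP_zero]
            rw [add_comm]

lemma starA
    (hcomm : ∀ a b : Z, circ a b = circ b a)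
    (hstar_one_right : ∀ w : H, astar w 1 = w)
    (hstar_rec : ∀ (a b : Z) (w₁ w₂ : H),
      astar (ι a * w₁) (ι b * w₂) =
        ι a * astar w₁ (ι b * w₂) + ι b * astar (ι a * w₁) w₂ + ι (circ a b) * astar w₁ w₂)
    (hact_one : ∀ a : Z, act a 1 = 0)
    (hact_rec : ∀ (a b : Z) (w : H), act a (ι b * w) = ι (circ a b) * w)
    (hS_one : ∀ r : ℚ, S r 1 = 1)
    (hS_rec : ∀ (r : ℚ) (a : Z) (w : H), S r (ι a * w) = ι a * S r w + r • act a (S r w))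
    (m : ℕ) (c : Z) (x : H) :
    astar (ι c * x) (S 1 ((ι a₁) ^ m))
      = ι c * astar x (S 1 ((ι a₁) ^ m))
        + ∑ k ∈ Finset.range m,
            (ι (zP circ a₁ k) * astar (ι c * x) (S 1 ((ι a₁) ^ (m - 1 - k)))
              + ι (circ c (zP circ a₁ k)) * astar x (S 1 ((ι a₁) ^ (m - 1 - k)))) := by
  have hUeq := u_eq ι circ act S a₁ hcomm hact_one hact_rec hS_one hS_rec
  cases m with
  | zero => simp [hS_one, hstar_one_right]
  | succ m =>
      calc astar (ι c * x) (S 1 ((ι a₁) ^ (m + 1)))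
          = ∑ k ∈ Finset.range (m + 1),
              astar (ι c * x) (ι (zP circ a₁ k) * S 1 ((ι a₁) ^ (m - k))) := by
            rw [hUeq, map_sum]
        _ = ∑ k ∈ Finset.range (m + 1),
              (ι c * astar x (ι (zP circ a₁ k) * S 1 ((ι a₁) ^ (m - k)))
                + (ι (zP circ a₁ k) * astar (ι c * x) (S 1 ((ι a₁) ^ (m - k)))
                  + ι (circ c (zP circ a₁ k)) * astar x (S 1 ((ι a₁) ^ (m - k))))) :=
            Finset.sum_congr rfl fun k _ => by rw [hstar_rec, add_assoc]
        _ = ι c * astar x (S 1 ((ι a₁) ^ (m + 1)))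
              + ∑ k ∈ Finset.range (m + 1),
                  (ι (zP circ a₁ k) * astar (ι c * x) (S 1 ((ι a₁) ^ (m + 1 - 1 - k)))
                    + ι (circ c (zP circ a₁ k)) * astar x (S 1 ((ι a₁) ^ (m + 1 - 1 - k)))) := by
            rw [Finset.sum_add_distrib]
            simp only [Nat.add_sub_cancel]
            congr 1
            rw [← Finset.mul_sum, ← map_sum, ← hUeq]

noncomputable def RqD (x : H) (q : ℕ) : H :=
  ∑ j ∈ Finset.range (q + 1),
    ((-1 : ℚ) ^ j) • astar (x * (ι a₁) ^ j) (S 1 ((ι a₁) ^ (q - j)))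

lemma RqM1
    (hcomm : ∀ a b : Z, circ a b = circ b a)
    (hstar_one_right : ∀ w : H, astar w 1 = w)
    (hstar_rec : ∀ (a b : Z) (w₁ w₂ : H),
      astar (ι a * w₁) (ι b * w₂) =
        ι a * astar w₁ (ι b * w₂) + ι b * astar (ι a * w₁) w₂ + ι (circ a b) * astar w₁ w₂)
    (hact_one : ∀ a : Z, act a 1 = 0)
    (hact_rec : ∀ (a b : Z) (w : H), act a (ι b * w) = ι (circ a b) * w)
    (hS_one : ∀ r : ℚ, S r 1 = 1)
    (hS_rec : ∀ (r : ℚ) (a : Z) (w : H), S r (ι a * w) = ι a * S r w + r • act a (S r w))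
    (c : Z) (x : H) (q : ℕ) :
    RqD ι astar S a₁ (ι c * x) q
      = ι c * RqD ι astar S a₁ x q
        + ∑ k ∈ Finset.range q,
            (ι (zP circ a₁ k) * RqD ι astar S a₁ (ι c * x) (q - 1 - k)
              + ι (circ c (zP circ a₁ k)) * RqD ι astar S a₁ x (q - 1 - k)) := by
  have hstarA := starA ι circ astar act S a₁ hcomm hstar_one_right hstar_rec hact_one
    hact_rec hS_one hS_rec
  calc RqD ι astar S a₁ (ι c * x) q
      = ∑ j ∈ Finset.range (q + 1),
          ((-1 : ℚ) ^ j) • astar (ι c * (x * (ι a₁) ^ j)) (S 1 ((ι a₁) ^ (q - j))) := by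
        simp only [RqD, mul_assoc]
    _ = ∑ j ∈ Finset.range (q + 1), ((-1 : ℚ) ^ j) •
          (ι c * astar (x * (ι a₁) ^ j) (S 1 ((ι a₁) ^ (q - j)))
            + ∑ k ∈ Finset.range (q - j),
                (ι (zP circ a₁ k) * astar (ι c * (x * (ι a₁) ^ j)) (S 1 ((ι a₁) ^ (q - j - 1 - k)))
                  + ι (circ c (zP circ a₁ k)) * astar (x * (ι a₁) ^ j) (S 1 ((ι a₁) ^ (q - j - 1 - k))))) :=
        Finset.sum_congr rfl fun j _ => by rw [hstarA (q - j) c (x * (ι a₁) ^ j)]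
    _ = (∑ j ∈ Finset.range (q + 1),
          ι c * (((-1 : ℚ) ^ j) • astar (x * (ι a₁) ^ j) (S 1 ((ι a₁) ^ (q - j)))))
        + ∑ j ∈ Finset.range (q + 1), ∑ k ∈ Finset.range (q - j),
            ((-1 : ℚ) ^ j) •
              (ι (zP circ a₁ k) * astar (ι c * (x * (ι a₁) ^ j)) (S 1 ((ι a₁) ^ (q - j - 1 - k)))
                + ι (circ c (zP circ a₁ k)) * astar (x * (ι a₁) ^ j) (S 1 ((ι a₁) ^ (q - j - 1 - k)))) := by
        simp only [smul_add, Finset.smul_sum, Finset.sum_add_distrib, mul_smul_comm]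
    _ = ι c * RqD ι astar S a₁ x q
        + ∑ k ∈ Finset.range q,
            (ι (zP circ a₁ k) * RqD ι astar S a₁ (ι c * x) (q - 1 - k)
              + ι (circ c (zP circ a₁ k)) * RqD ι astar S a₁ x (q - 1 - k)) := by
        congr 1
        · rw [← Finset.mul_sum]; rfl
        · rw [Finset.sum_range_succ]
          simp only [Nat.sub_self, Finset.range_zero, Finset.sum_empty, add_zero]
          rw [triSwap q]
          refine Finset.sum_congr rfl fun k hk => ?_
          simp only [Finset.mem_range] at hk
          have h1 : q - k = (q - 1 - k) + 1 := by omega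
          have h2 : ∀ j : ℕ, q - j - 1 - k = q - 1 - k - j := fun j => by omega
          rw [h1]
          simp only [h2, RqD, smul_add, Finset.sum_add_distrib, ← mul_smul_comm,
            ← Finset.mul_sum, mul_assoc]

lemma RqM2
    (hcomm : ∀ a b : Z, circ a b = circ b a)
    (hstar_one_right : ∀ w : H, astar w 1 = w)
    (hstar_rec : ∀ (a b : Z) (w₁ w₂ : H),
      astar (ι a * w₁) (ι b * w₂) =
        ι a * astar w₁ (ι b * w₂) + ι b * astar (ι a * w₁) w₂ + ι (circ a b) * astar w₁ w₂)
    (hact_one : ∀ a : Z, act a 1 = 0)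
    (hact_rec : ∀ (a b : Z) (w : H), act a (ι b * w) = ι (circ a b) * w)
    (hS_one : ∀ r : ℚ, S r 1 = 1)
    (hS_rec : ∀ (r : ℚ) (a : Z) (w : H), S r (ι a * w) = ι a * S r w + r • act a (S r w))
    (c : Z) (x : H) (q : ℕ) :
    act a₁ (RqD ι astar S a₁ (ι c * x) q)
      = ι (circ a₁ c) * RqD ι astar S a₁ x q
        + ∑ k ∈ Finset.range q,
            (ι (zP circ a₁ (k + 1)) * RqD ι astar S a₁ (ι c * x) (q - 1 - k)
              + ι (circ a₁ (circ c (zP circ a₁ k))) * RqD ι astar S a₁ x (q - 1 - k)) := by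
  rw [RqM1 ι circ astar act S a₁ hcomm hstar_one_right hstar_rec hact_one hact_rec hS_one
    hS_rec c x q, map_add, map_sum]
  congr 1
  · exact hact_rec a₁ c _
  · refine Finset.sum_congr rfl fun k _ => ?_
    rw [map_add, hact_rec, hact_rec, circ_zP circ a₁ hcomm]

lemma RqStar
    (hcomm : ∀ a b : Z, circ a b = circ b a)
    (hassoc : ∀ a b c : Z, circ (circ a b) c = circ a (circ b c))
    (hstar_one_right : ∀ w : H, astar w 1 = w)
    (hstar_rec : ∀ (a b : Z) (w₁ w₂ : H),
      astar (ι a * w₁) (ι b * w₂) =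
        ι a * astar w₁ (ι b * w₂) + ι b * astar (ι a * w₁) w₂ + ι (circ a b) * astar w₁ w₂)
    (hact_one : ∀ a : Z, act a 1 = 0)
    (hact_rec : ∀ (a b : Z) (w : H), act a (ι b * w) = ι (circ a b) * w)
    (hS_one : ∀ r : ℚ, S r 1 = 1)
    (hS_rec : ∀ (r : ℚ) (a : Z) (w : H), S r (ι a * w) = ι a * S r w + r • act a (S r w))
    (c : Z) (x : H) (q : ℕ) :
    RqD ι astar S a₁ (ι c * x) (q + 1)
      = ι c * RqD ι astar S a₁ x (q + 1)
        + ι a₁ * RqD ι astar S a₁ (ι c * x) q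
        + act a₁ (RqD ι astar S a₁ (ι c * x) q) := by
  rw [RqM1 ι circ astar act S a₁ hcomm hstar_one_right hstar_rec hact_one hact_rec hS_one
    hS_rec c x (q + 1)]
  rw [RqM2 ι circ astar act S a₁ hcomm hstar_one_right hstar_rec hact_one hact_rec hS_one
    hS_rec c x q]
  simp only [Nat.add_sub_cancel]
  rw [Finset.sum_range_succ']
  have h1 : ∀ k : ℕ, q - 1 - k = q - (k + 1) := fun k => by omega
  simp only [h1, Nat.sub_zero, zP_zero, circ_zP' circ a₁ hcomm hassoc]
  rw [hcomm c a₁]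
  abel

lemma Rq_zero
    (hstar_one_right : ∀ w : H, astar w 1 = w)
    (hS_one : ∀ r : ℚ, S r 1 = 1)
    (x : H) : RqD ι astar S a₁ x 0 = x := by
  simp [RqD, hS_one, hstar_one_right]

lemma Rq_key
    (hcomm : ∀ a b : Z, circ a b = circ b a)
    (hstar_one_left : ∀ w : H, astar 1 w = w)
    (hstar_one_right : ∀ w : H, astar w 1 = w)
    (hstar_rec : ∀ (a b : Z) (w₁ w₂ : H),
      astar (ι a * w₁) (ι b * w₂) =
        ι a * astar w₁ (ι b * w₂) + ι b * astar (ι a * w₁) w₂ + ι (circ a b) * astar w₁ w₂)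
    (hact_one : ∀ a : Z, act a 1 = 0)
    (hact_rec : ∀ (a b : Z) (w : H), act a (ι b * w) = ι (circ a b) * w)
    (hS_one : ∀ r : ℚ, S r 1 = 1)
    (hS_rec : ∀ (r : ℚ) (a : Z) (w : H), S r (ι a * w) = ι a * S r w + r • act a (S r w)) :
    ∀ t : ℕ, RqD ι astar S a₁ (ι a₁) t = S 1 ((ι a₁) ^ (t + 1))
      ∧ RqD ι astar S a₁ (1 : H) (t + 1) = 0 := by
  have hRq0 := Rq_zero ι astar S a₁ hstar_one_right hS_one
  have hUeq := u_eq ι circ act S a₁ hcomm hact_one hact_rec hS_one hS_rec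
  intro t
  induction t using Nat.strong_induction_on with
  | _ t IH =>
    have h1 : RqD ι astar S a₁ (ι a₁) t = S 1 ((ι a₁) ^ (t + 1)) := by
      have base := RqM1 ι circ astar act S a₁ hcomm hstar_one_right hstar_rec hact_one
        hact_rec hS_one hS_rec a₁ 1 t
      rw [mul_one] at base
      match t, IH with
      | 0, _ =>
          rw [hRq0, hUeq 0]
          simp [zP_zero, hS_one]
      | (t' + 1), IH =>
          rw [base, (IH t' (by omega)).2, mul_zero, zero_add]
          have hidx : ∀ k : ℕ, t' + 1 - 1 - k = t' - k := fun k => by omega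
          simp only [hidx, circ_zP circ a₁ hcomm]
          rw [Finset.sum_add_distrib]
          have hL1 : ∑ k ∈ Finset.range (t' + 1),
                ι (zP circ a₁ k) * RqD ι astar S a₁ (ι a₁) (t' - k)
              = ∑ k ∈ Finset.range (t' + 1), ι (zP circ a₁ k) * S 1 ((ι a₁) ^ (t' + 1 - k)) := by
            refine Finset.sum_congr rfl fun k hk => ?_
            simp only [Finset.mem_range] at hk
            have h3 : t' + 1 - k = (t' - k) + 1 := by omega
            rw [h3, (IH (t' - k) (by omega)).1]
          have hL2 : ∑ k ∈ Finset.range (t' + 1),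
                ι (zP circ a₁ (k + 1)) * RqD ι astar S a₁ (1 : H) (t' - k)
              = ι (zP circ a₁ (t' + 1)) * S 1 ((ι a₁) ^ (t' + 1 - (t' + 1))) := by
            rw [Finset.sum_range_succ, Nat.sub_self, Nat.sub_self, pow_zero, hS_one, hRq0]
            rw [Finset.sum_eq_zero, zero_add]
            intro k hk
            simp only [Finset.mem_range] at hk
            have h4 : t' - k = (t' - 1 - k) + 1 := by omega
            rw [h4, (IH (t' - 1 - k) (by omega)).2, mul_zero]
          rw [hL1, hL2, hUeq (t' + 1)]
          exact (Finset.sum_range_succ _ _).symm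
    refine ⟨h1, ?_⟩
    have expand : RqD ι astar S a₁ (1 : H) (t + 1)
        = ∑ j ∈ Finset.range (t + 2),
            ((-1 : ℚ) ^ j) • astar ((ι a₁) ^ j) (S 1 ((ι a₁) ^ (t + 1 - j))) := by
      simp only [RqD, one_mul]
    rw [expand, Finset.sum_range_succ']
    have hterm : ∀ j : ℕ,
        ((-1 : ℚ) ^ (j + 1)) • astar ((ι a₁) ^ (j + 1)) (S 1 ((ι a₁) ^ (t + 1 - (j + 1))))
          = -(((-1 : ℚ) ^ j) • astar (ι a₁ * (ι a₁) ^ j) (S 1 ((ι a₁) ^ (t - j)))) := by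
      intro j
      have hi : t + 1 - (j + 1) = t - j := by omega
      rw [hi, pow_succ, mul_neg_one, neg_smul, ← pow_succ']
    simp only [hterm]
    rw [Finset.sum_neg_distrib]
    have hRq : (∑ j ∈ Finset.range (t + 1),
        ((-1 : ℚ) ^ j) • astar (ι a₁ * (ι a₁) ^ j) (S 1 ((ι a₁) ^ (t - j))))
        = RqD ι astar S a₁ (ι a₁) t := by
      simp only [RqD]
    rw [hRq, h1]
    simp [hstar_one_left]

lemma mainAux
    (hcomm : ∀ a b : Z, circ a b = circ b a)
    (hassoc : ∀ a b c : Z, circ (circ a b) c = circ a (circ b c))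
    (hstar_one_left : ∀ w : H, astar 1 w = w)
    (hstar_one_right : ∀ w : H, astar w 1 = w)
    (hstar_rec : ∀ (a b : Z) (w₁ w₂ : H),
      astar (ι a * w₁) (ι b * w₂) =
        ι a * astar w₁ (ι b * w₂) + ι b * astar (ι a * w₁) w₂ + ι (circ a b) * astar w₁ w₂)
    (hact_one : ∀ a : Z, act a 1 = 0)
    (hact_rec : ∀ (a b : Z) (w : H), act a (ι b * w) = ι (circ a b) * w)
    (hS_one : ∀ r : ℚ, S r 1 = 1)
    (hS_rec : ∀ (r : ℚ) (a : Z) (w : H), S r (ι a * w) = ι a * S r w + r • act a (S r w))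
    (r : ℚ) :
    ∀ p : ℕ, S r ((ι a₁) ^ p * ι a₂)
      = ∑ i ∈ Finset.range (p + 1),
          (r ^ (p - i) * (1 - r) ^ i) • RqD ι astar S a₁ ((ι a₁) ^ i * ι a₂) (p - i) := by
  have hRq0 := Rq_zero ι astar S a₁ hstar_one_right hS_one
  have hStar := RqStar ι circ astar act S a₁ hcomm hassoc hstar_one_right hstar_rec hact_one
    hact_rec hS_one hS_rec
  have hKey := Rq_key ι circ astar act S a₁ hcomm hstar_one_left hstar_one_right hstar_rec
    hact_one hact_rec hS_one hS_rec
  have hStar0 : ∀ q : ℕ, RqD ι astar S a₁ (ι a₂) (q + 1)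
      = ι a₁ * RqD ι astar S a₁ (ι a₂) q + act a₁ (RqD ι astar S a₁ (ι a₂) q) := by
    intro q
    have h := hStar a₂ 1 q
    rw [mul_one] at h
    rw [h, (hKey q).2, mul_zero, zero_add]
  intro p
  induction p with
  | zero =>
      have hbase : S r (ι a₂ * 1) = ι a₂ * S r 1 + r • act a₂ (S r 1) := hS_rec r a₂ 1
      rw [hS_one, hact_one, mul_one, smul_zero, add_zero] at hbase
      simp [hRq0, hbase]
  | succ p ih =>
      rw [pow_succ', mul_assoc, hS_rec, ih]
      have hmid : ∀ i ∈ Finset.range p,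
          (r ^ (p + 1 - (i + 1)) * (1 - r) ^ (i + 1)) •
              RqD ι astar S a₁ ((ι a₁) ^ (i + 1) * ι a₂) (p + 1 - (i + 1))
            = (r ^ (p - i) * (1 - r) ^ (i + 1)) •
                (ι a₁ * RqD ι astar S a₁ ((ι a₁) ^ i * ι a₂) (p - i))
              + ((r ^ (p - i) * (1 - r) ^ (i + 1)) •
                  (ι a₁ * RqD ι astar S a₁ ((ι a₁) ^ (i + 1) * ι a₂) (p - (i + 1)))
                + (r ^ (p - i) * (1 - r) ^ (i + 1)) •
                    act a₁ (RqD ι astar S a₁ ((ι a₁) ^ (i + 1) * ι a₂) (p - (i + 1)))) := by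
        intro i hi
        simp only [Finset.mem_range] at hi
        have h1 : p + 1 - (i + 1) = p - i := by omega
        have h2 : p - i = (p - (i + 1)) + 1 := by omega
        have hw : (ι a₁ : H) ^ (i + 1) * ι a₂ = ι a₁ * ((ι a₁) ^ i * ι a₂) := by
          rw [pow_succ', mul_assoc]
        rw [h1, hw, h2, hStar a₁ ((ι a₁) ^ i * ι a₂) (p - (i + 1)), smul_add, smul_add]
        abel
      have hg0 : (r ^ (p + 1 - 0) * (1 - r) ^ 0) •
            RqD ι astar S a₁ ((ι a₁) ^ 0 * ι a₂) (p + 1 - 0)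
          = (r ^ (p + 1 - 0) * (1 - r) ^ 0) •
              (ι a₁ * RqD ι astar S a₁ ((ι a₁) ^ 0 * ι a₂) (p - 0))
            + (r ^ (p + 1 - 0) * (1 - r) ^ 0) •
                act a₁ (RqD ι astar S a₁ ((ι a₁) ^ 0 * ι a₂) (p - 0)) := by
        have hw : (ι a₁ : H) ^ 0 * ι a₂ = ι a₂ := by rw [pow_zero, one_mul]
        rw [hw, Nat.sub_zero, Nat.sub_zero, hStar0 p, smul_add]
      have hglast : (r ^ (p + 1 - (p + 1)) * (1 - r) ^ (p + 1)) •
            RqD ι astar S a₁ ((ι a₁) ^ (p + 1) * ι a₂) (p + 1 - (p + 1))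
          = (r ^ (p - p) * (1 - r) ^ (p + 1)) •
              (ι a₁ * RqD ι astar S a₁ ((ι a₁) ^ p * ι a₂) (p - p)) := by
        have h1 : p + 1 - (p + 1) = 0 := by omega
        have h2 : p - p = 0 := by omega
        rw [h1, h2, hRq0, hRq0]
        congr 1
        rw [pow_succ', mul_assoc]
      have e1 : ι a₁ * (∑ i ∈ Finset.range (p + 1),
            (r ^ (p - i) * (1 - r) ^ i) • RqD ι astar S a₁ ((ι a₁) ^ i * ι a₂) (p - i))
          = ∑ i ∈ Finset.range (p + 1),
              ((r ^ (p + 1 - i) * (1 - r) ^ i) •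
                  (ι a₁ * RqD ι astar S a₁ ((ι a₁) ^ i * ι a₂) (p - i))
                + (r ^ (p - i) * (1 - r) ^ (i + 1)) •
                    (ι a₁ * RqD ι astar S a₁ ((ι a₁) ^ i * ι a₂) (p - i))) := by
        rw [Finset.mul_sum]
        refine Finset.sum_congr rfl fun i hi => ?_
        simp only [Finset.mem_range] at hi
        rw [mul_smul_comm, ← add_smul]
        congr 1
        have h : p + 1 - i = (p - i) + 1 := by omega
        rw [h]; ring
      have e2 : r • act a₁ (∑ i ∈ Finset.range (p + 1),
            (r ^ (p - i) * (1 - r) ^ i) • RqD ι astar S a₁ ((ι a₁) ^ i * ι a₂) (p - i))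
          = ∑ i ∈ Finset.range (p + 1),
              (r ^ (p + 1 - i) * (1 - r) ^ i) •
                act a₁ (RqD ι astar S a₁ ((ι a₁) ^ i * ι a₂) (p - i)) := by
        rw [map_sum, Finset.smul_sum]
        refine Finset.sum_congr rfl fun i hi => ?_
        simp only [Finset.mem_range] at hi
        rw [map_smul, smul_smul]
        congr 1
        have h : p + 1 - i = (p - i) + 1 := by omega
        rw [h]; ring
      have hSa : ∑ i ∈ Finset.range (p + 1),
            (r ^ (p + 1 - i) * (1 - r) ^ i) •
              (ι a₁ * RqD ι astar S a₁ ((ι a₁) ^ i * ι a₂) (p - i))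
          = ∑ i ∈ Finset.range p,
              (r ^ (p - i) * (1 - r) ^ (i + 1)) •
                (ι a₁ * RqD ι astar S a₁ ((ι a₁) ^ (i + 1) * ι a₂) (p - (i + 1)))
            + (r ^ (p + 1 - 0) * (1 - r) ^ 0) •
                (ι a₁ * RqD ι astar S a₁ ((ι a₁) ^ 0 * ι a₂) (p - 0)) := by
        rw [Finset.sum_range_succ']
        congr 1
        refine Finset.sum_congr rfl fun i _ => ?_
        have h : p + 1 - (i + 1) = p - i := by omega
        rw [h]
      have hSc : ∑ i ∈ Finset.range (p + 1),
            (r ^ (p + 1 - i) * (1 - r) ^ i) •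
              act a₁ (RqD ι astar S a₁ ((ι a₁) ^ i * ι a₂) (p - i))
          = ∑ i ∈ Finset.range p,
              (r ^ (p - i) * (1 - r) ^ (i + 1)) •
                act a₁ (RqD ι astar S a₁ ((ι a₁) ^ (i + 1) * ι a₂) (p - (i + 1)))
            + (r ^ (p + 1 - 0) * (1 - r) ^ 0) •
                act a₁ (RqD ι astar S a₁ ((ι a₁) ^ 0 * ι a₂) (p - 0)) := by
        rw [Finset.sum_range_succ']
        congr 1
        refine Finset.sum_congr rfl fun i _ => ?_
        have h : p + 1 - (i + 1) = p - i := by omega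
        rw [h]
      conv_rhs => rw [Finset.sum_range_succ', Finset.sum_range_succ]
      rw [Finset.sum_congr rfl hmid, Finset.sum_add_distrib, Finset.sum_add_distrib,
        hg0, hglast, e1, e2, Finset.sum_add_distrib, hSa, hSc, Finset.sum_range_succ]
      abel

end SrAux

theorem Sr_pow_mul_right
    {Z H : Type*} [AddCommGroup Z] [Module ℚ Z] [Ring H] [Algebra ℚ H]
    (ι : Z →ₗ[ℚ] H)
    (circ : Z →ₗ[ℚ] Z →ₗ[ℚ] Z)
    (hcomm : ∀ a b : Z, circ a b = circ b a)
    (hassoc : ∀ a b c : Z, circ (circ a b) c = circ a (circ b c))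
    (astar : H →ₗ[ℚ] H →ₗ[ℚ] H)
    (hstar_one_left : ∀ w : H, astar 1 w = w)
    (hstar_one_right : ∀ w : H, astar w 1 = w)
    (hstar_rec : ∀ (a b : Z) (w₁ w₂ : H),
      astar (ι a * w₁) (ι b * w₂) =
        ι a * astar w₁ (ι b * w₂) + ι b * astar (ι a * w₁) w₂ + ι (circ a b) * astar w₁ w₂)
    (act : Z →ₗ[ℚ] H →ₗ[ℚ] H)
    (hact_one : ∀ a : Z, act a 1 = 0)
    (hact_rec : ∀ (a b : Z) (w : H), act a (ι b * w) = ι (circ a b) * w)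
    (S : ℚ → H →ₗ[ℚ] H)
    (hS_one : ∀ r : ℚ, S r 1 = 1)
    (hS_rec : ∀ (r : ℚ) (a : Z) (w : H), S r (ι a * w) = ι a * S r w + r • act a (S r w))
    (r : ℚ) (a₁ a₂ : Z) (p : ℕ) (hp : 1 ≤ p) :
    S r ((ι a₁) ^ p * ι a₂) =
      ∑ i ∈ Finset.range (p + 1), ∑ j ∈ Finset.range (p + 1 - i),
        ((-1 : ℚ) ^ j * r ^ (p - i) * (1 - r) ^ i) •
          astar ((ι a₁) ^ i * ι a₂ * (ι a₁) ^ j) (S 1 ((ι a₁) ^ (p - i - j))) := by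
  have hmain := SrAux.mainAux ι circ astar act S a₁ a₂ hcomm hassoc hstar_one_left
    hstar_one_right hstar_rec hact_one hact_rec hS_one hS_rec r p
  refine hmain.trans (Finset.sum_congr rfl fun i hi => ?_)
  simp only [Finset.mem_range] at hi
  have h : p + 1 - i = (p - i) + 1 := by omega
  rw [h]
  simp only [SrAux.RqD, Finset.smul_sum, smul_smul]
  refine Finset.sum_congr rfl fun j hj => ?_
  congr 1
  ring
end

section
/- In the harmonic algebra setting, for any a₁, a₂ ∈ 𝔷 and any positive integer q, S^r(a₁ a₂^q) = sum over pairs (i,j) of nonnegative integers with i+j ≤ q of (-1)^i * r^(q-j) * (1-r)^j * (a₂^i a₁ a₂^j ∗ S(a₂^(q-i-j))), where S = S^1 and r is a polynomial variable. -/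
open Finset

section Tri
variable {M : Type*} [AddCommMonoid M]

lemma tri_peel (g : ℕ → ℕ → M) (m : ℕ) :
    ∑ i ∈ range (m+1), ∑ k ∈ range (m+1-i), g i k
      = (∑ i ∈ range m, ∑ k ∈ range (m-i), g i k) + ∑ i ∈ range (m+1), g i (m-i) := by
  have h : ∀ i ∈ range (m+1), ∑ k ∈ range (m+1-i), g i k
      = (∑ k ∈ range (m-i), g i k) + g i (m-i) := by
    intro i hi
    have hi' : i ≤ m := Nat.lt_succ_iff.mp (mem_range.mp hi)
    have h2 : m+1-i = (m-i)+1 := by omega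
    rw [h2, Finset.sum_range_succ]
  rw [Finset.sum_congr rfl h, Finset.sum_add_distrib]
  congr 1
  rw [Finset.sum_range_succ]
  simp

lemma tri_swap_s12 (g : ℕ → ℕ → M) (m : ℕ) :
    ∑ i ∈ range m, ∑ k ∈ range (m-i), g i k = ∑ k ∈ range m, ∑ i ∈ range (m-k), g i k := by
  induction m with
  | zero => simp
  | succ m ih =>
    rw [tri_peel g m, tri_peel (fun k i => g i k) m, ih]
    congr 1
    rw [← Finset.sum_range_reflect (fun j => g j (m-j)) (m+1)]
    refine Finset.sum_congr rfl ?_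
    intro i hi
    have hi' : i ≤ m := Nat.lt_succ_iff.mp (mem_range.mp hi)
    have e1 : m + 1 - 1 - i = m - i := by omega
    have e2 : m - (m - i) = i := by omega
    simp only [e1, e2]

lemma tri_peel_inner (g : ℕ → ℕ → M) (m : ℕ) :
    ∑ i ∈ range m, ∑ k ∈ range (m-i), g i k
      = (∑ i ∈ range m, g i 0) + ∑ i ∈ range m, ∑ k ∈ range (m-1-i), g i (k+1) := by
  rw [← Finset.sum_add_distrib]
  refine Finset.sum_congr rfl ?_
  intro i hi
  have hi' : i < m := mem_range.mp hi
  have h1 : m - i = (m-1-i)+1 := by omega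
  rw [h1, Finset.sum_range_succ', add_comm]

lemma tri_peel_outer (g : ℕ → ℕ → M) (m : ℕ) :
    ∑ i ∈ range m, ∑ k ∈ range (m-i), g i k
      = (∑ k ∈ range m, g 0 k) + ∑ i ∈ range m, ∑ k ∈ range (m-1-i), g (i+1) k := by
  cases m with
  | zero => simp
  | succ m' =>
    rw [Finset.sum_range_succ' (fun i => ∑ k ∈ range (m'+1-i), g i k) m']
    rw [Finset.sum_range_succ (fun i => ∑ k ∈ range (m'+1-1-i), g (i+1) k) m']
    simp [Nat.succ_sub_succ]
    rw [add_comm]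

lemma tri_swap' (g : ℕ → ℕ → M) (m : ℕ) :
    ∑ i ∈ range m, ∑ k ∈ range (m-1-i), g i k = ∑ k ∈ range m, ∑ i ∈ range (m-1-k), g i k := by
  cases m with
  | zero => simp
  | succ m' =>
    have l1 : ∀ h : ℕ → ℕ → M, ∑ i ∈ range (m'+1), ∑ k ∈ range (m'+1-1-i), h i k
        = ∑ i ∈ range m', ∑ k ∈ range (m'-i), h i k := by
      intro h
      rw [Finset.sum_range_succ]
      simp [Nat.succ_sub_succ]
    rw [l1 g, l1 (fun k i => g i k), tri_swap_s12]
end Tri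

section Harm
variable {Z H : Type*} [AddCommGroup Z] [Module ℚ Z] [Ring H] [Algebra ℚ H]
variable (ι : Z →ₗ[ℚ] H) (circ : Z →ₗ[ℚ] Z →ₗ[ℚ] Z)
variable (astar : H →ₗ[ℚ] H →ₗ[ℚ] H) (act : Z →ₗ[ℚ] H →ₗ[ℚ] H) (S : ℚ → H →ₗ[ℚ] H)
variable (a₁ a₂ : Z)

/-- iterated circle powers of `a₂`: `zp k = a₂^{∘(k+1)}` -/
def zp (circ : Z →ₗ[ℚ] Z →ₗ[ℚ] Z) (a₂ : Z) : ℕ → Z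
  | 0 => a₂
  | k + 1 => circ (zp circ a₂ k) a₂

lemma zp_succ (hcomm : ∀ a b : Z, circ a b = circ b a) (k : ℕ) :
    circ a₂ (zp circ a₂ k) = zp circ a₂ (k+1) := by
  rw [hcomm]; rfl

lemma lem_S_pow
    (hcomm : ∀ a b : Z, circ a b = circ b a)
    (hact_one : ∀ a : Z, act a 1 = 0)
    (hact_rec : ∀ (a b : Z) (w : H), act a (ι b * w) = ι (circ a b) * w)
    (hS_one : ∀ r : ℚ, S r 1 = 1)
    (hS_rec : ∀ (r : ℚ) (a : Z) (w : H), S r (ι a * w) = ι a * S r w + r • act a (S r w))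
    (r : ℚ) : ∀ n : ℕ, S r ((ι a₂) ^ (n+1))
      = ∑ k ∈ range (n+1), r^k • (ι (zp circ a₂ k) * S r ((ι a₂) ^ (n-k))) := by
  intro n
  induction n with
  | zero =>
    have h1 : S r (ι a₂) = ι a₂ := by
      rw [← mul_one (ι a₂), hS_rec, hS_one, hact_one, smul_zero, add_zero, mul_one]
    rw [pow_one, h1, Finset.sum_range_one, pow_zero, one_smul, Nat.sub_zero, pow_zero, hS_one, mul_one]
    rfl
  | succ n ih =>
    have step : S r ((ι a₂) ^ (n+2)) = ι a₂ * S r ((ι a₂)^(n+1)) + r • act a₂ (S r ((ι a₂)^(n+1))) := by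
      rw [pow_succ' (ι a₂) (n+1), hS_rec]
    rw [step]
    have hact : act a₂ (S r ((ι a₂)^(n+1)))
        = ∑ k ∈ range (n+1), r^k • (ι (zp circ a₂ (k+1)) * S r ((ι a₂) ^ (n-k))) := by
      rw [ih, map_sum]
      refine Finset.sum_congr rfl ?_
      intro k _
      rw [map_smul, hact_rec, zp_succ circ a₂ hcomm]
    rw [hact, Finset.smul_sum]
    rw [Finset.sum_range_succ' (fun k => r^k • (ι (zp circ a₂ k) * S r ((ι a₂) ^ (n+1-k)))) (n+1)]
    have e0 : r^0 • (ι (zp circ a₂ 0) * S r ((ι a₂)^(n+1-0))) = ι a₂ * S r ((ι a₂)^(n+1)) := by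
      rw [pow_zero, one_smul]; rfl
    rw [e0, add_comm]
    congr 1
    refine Finset.sum_congr rfl ?_
    intro k _
    rw [smul_smul, ← pow_succ']
    have : n + 1 - (k+1) = n - k := by omega
    rw [this]

lemma lem_star_S
    (hcomm : ∀ a b : Z, circ a b = circ b a)
    (hact_one : ∀ a : Z, act a 1 = 0)
    (hact_rec : ∀ (a b : Z) (w : H), act a (ι b * w) = ι (circ a b) * w)
    (hS_one : ∀ r : ℚ, S r 1 = 1)
    (hS_rec : ∀ (r : ℚ) (a : Z) (w : H), S r (ι a * w) = ι a * S r w + r • act a (S r w))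
    (hstar_rec : ∀ (a b : Z) (w₁ w₂ : H),
      astar (ι a * w₁) (ι b * w₂) =
        ι a * astar w₁ (ι b * w₂) + ι b * astar (ι a * w₁) w₂ + ι (circ a b) * astar w₁ w₂)
    (a : Z) (w : H) (m : ℕ) :
    astar (ι a * w) (S 1 ((ι a₂)^(m+1)))
      = ι a * astar w (S 1 ((ι a₂)^(m+1)))
        + ∑ k ∈ range (m+1), ι (zp circ a₂ k) * astar (ι a * w) (S 1 ((ι a₂)^(m-k)))
        + ∑ k ∈ range (m+1), ι (circ a (zp circ a₂ k)) * astar w (S 1 ((ι a₂)^(m-k))) := by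
  have hx : S 1 ((ι a₂)^(m+1)) = ∑ k ∈ range (m+1), ι (zp circ a₂ k) * S 1 ((ι a₂) ^ (m-k)) := by
    rw [lem_S_pow ι circ act S a₂ hcomm hact_one hact_rec hS_one hS_rec 1 m]
    refine Finset.sum_congr rfl ?_
    intro k _
    rw [one_pow, one_smul]
  conv_lhs => rw [hx]
  rw [map_sum]
  have expand : ∀ k ∈ range (m+1),
      astar (ι a * w) (ι (zp circ a₂ k) * S 1 ((ι a₂) ^ (m-k)))
        = ι a * astar w (ι (zp circ a₂ k) * S 1 ((ι a₂) ^ (m-k)))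
          + ι (zp circ a₂ k) * astar (ι a * w) (S 1 ((ι a₂) ^ (m-k)))
          + ι (circ a (zp circ a₂ k)) * astar w (S 1 ((ι a₂) ^ (m-k))) := by
    intro k _
    exact hstar_rec a (zp circ a₂ k) w (S 1 ((ι a₂) ^ (m-k)))
  rw [Finset.sum_congr rfl expand, Finset.sum_add_distrib, Finset.sum_add_distrib]
  congr 2
  rw [← Finset.mul_sum]
  congr 1
  rw [← map_sum, ← hx]

/-- `Qf j m = x^j * S(x^m)` (harmonic product) -/
def Qf (ι : Z →ₗ[ℚ] H) (astar : H →ₗ[ℚ] H →ₗ[ℚ] H) (S : ℚ → H →ₗ[ℚ] H) (a₂ : Z) (j m : ℕ) : H :=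
  astar ((ι a₂)^j) (S 1 ((ι a₂)^m))

/-- `Pf i j m = (x^i a₁ x^j) * S(x^m)` (harmonic product) -/
def Pf (ι : Z →ₗ[ℚ] H) (astar : H →ₗ[ℚ] H →ₗ[ℚ] H) (S : ℚ → H →ₗ[ℚ] H) (a₁ a₂ : Z) (i j m : ℕ) : H :=
  astar ((ι a₂)^i * ι a₁ * (ι a₂)^j) (S 1 ((ι a₂)^m))

section Rec
variable (hcomm : ∀ a b : Z, circ a b = circ b a)
variable (hstar_one_left : ∀ w : H, astar 1 w = w)
variable (hstar_one_right : ∀ w : H, astar w 1 = w)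
variable (hstar_rec : ∀ (a b : Z) (w₁ w₂ : H),
      astar (ι a * w₁) (ι b * w₂) =
        ι a * astar w₁ (ι b * w₂) + ι b * astar (ι a * w₁) w₂ + ι (circ a b) * astar w₁ w₂)
variable (hact_one : ∀ a : Z, act a 1 = 0)
variable (hact_rec : ∀ (a b : Z) (w : H), act a (ι b * w) = ι (circ a b) * w)
variable (hS_one : ∀ r : ℚ, S r 1 = 1)
variable (hS_rec : ∀ (r : ℚ) (a : Z) (w : H), S r (ι a * w) = ι a * S r w + r • act a (S r w))

include hcomm hstar_one_right hstar_rec hact_one hact_rec hS_one hS_rec in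
lemma lem_QR1 (j m : ℕ) :
    Qf ι astar S a₂ (j+1) m
      = ι a₂ * Qf ι astar S a₂ j m
        + ∑ k ∈ range m, ι (zp circ a₂ k) * Qf ι astar S a₂ (j+1) (m-1-k)
        + ∑ k ∈ range m, ι (zp circ a₂ (k+1)) * Qf ι astar S a₂ j (m-1-k) := by
  have hw : ((ι a₂):H)^(j+1) = ι a₂ * (ι a₂)^j := pow_succ' (ι a₂) j
  cases m with
  | zero =>
    simp only [range_zero, Finset.sum_empty, add_zero]
    rw [Qf, Qf, pow_zero, hS_one, hstar_one_right, hstar_one_right, hw]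
  | succ m' =>
    rw [Qf, hw,
      lem_star_S ι circ astar act S a₂ hcomm hact_one hact_rec hS_one hS_rec hstar_rec a₂ ((ι a₂)^j) m']
    simp only [Qf, hw, Nat.add_sub_cancel]
    simp only [zp_succ circ a₂ hcomm]

include hcomm hstar_one_right hstar_rec hact_one hact_rec hS_one hS_rec in
lemma lem_R1 (i j m : ℕ) :
    Pf ι astar S a₁ a₂ (i+1) j m
      = ι a₂ * Pf ι astar S a₁ a₂ i j m
        + ∑ k ∈ range m, ι (zp circ a₂ k) * Pf ι astar S a₁ a₂ (i+1) j (m-1-k)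
        + ∑ k ∈ range m, ι (zp circ a₂ (k+1)) * Pf ι astar S a₁ a₂ i j (m-1-k) := by
  have hw : ((ι a₂):H)^(i+1) * ι a₁ * (ι a₂)^j = ι a₂ * ((ι a₂)^i * ι a₁ * (ι a₂)^j) := by
    rw [pow_succ' (ι a₂) i, mul_assoc (ι a₂) _ (ι a₁), mul_assoc (ι a₂)]
  cases m with
  | zero =>
    simp only [range_zero, Finset.sum_empty, add_zero]
    rw [Pf, Pf, pow_zero, hS_one, hstar_one_right, hstar_one_right, hw]
  | succ m' =>
    rw [Pf, hw,
      lem_star_S ι circ astar act S a₂ hcomm hact_one hact_rec hS_one hS_rec hstar_rec a₂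
        ((ι a₂)^i * ι a₁ * (ι a₂)^j) m']
    simp only [Pf, hw, Nat.add_sub_cancel]
    simp only [zp_succ circ a₂ hcomm]

include hcomm hstar_one_right hstar_rec hact_one hact_rec hS_one hS_rec in
lemma lem_R0 (j m : ℕ) :
    Pf ι astar S a₁ a₂ 0 j m
      = ι a₁ * Qf ι astar S a₂ j m
        + ∑ k ∈ range m, ι (zp circ a₂ k) * Pf ι astar S a₁ a₂ 0 j (m-1-k)
        + ∑ k ∈ range m, ι (circ a₁ (zp circ a₂ k)) * Qf ι astar S a₂ j (m-1-k) := by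
  have hw : ((ι a₂):H)^0 * ι a₁ * (ι a₂)^j = ι a₁ * (ι a₂)^j := by
    rw [pow_zero, one_mul]
  cases m with
  | zero =>
    simp only [range_zero, Finset.sum_empty, add_zero]
    rw [Pf, Qf, hw, pow_zero, hS_one, hstar_one_right, hstar_one_right]
  | succ m' =>
    rw [Pf, hw,
      lem_star_S ι circ astar act S a₂ hcomm hact_one hact_rec hS_one hS_rec hstar_rec a₁
        ((ι a₂)^j) m']
    simp only [Pf, Qf, hw, Nat.add_sub_cancel]

include hstar_one_left in
lemma lem_Q0 (m : ℕ) : Qf ι astar S a₂ 0 m = S 1 ((ι a₂)^m) := by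
  rw [Qf, pow_zero, hstar_one_left]

include hS_one hstar_one_right in
lemma lem_Qm0 (j : ℕ) : Qf ι astar S a₂ j 0 = (ι a₂)^j := by
  rw [Qf, pow_zero, hS_one, hstar_one_right]


include hcomm hstar_one_right hstar_rec hact_one hact_rec hS_one hS_rec in
lemma lem_A (j m : ℕ) :
    ∑ i ∈ range (m+1), ((-1:ℚ)^i) • Pf ι astar S a₁ a₂ i j (m-i)
      = ι a₁ * Qf ι astar S a₂ j m
        + ∑ k ∈ range m, ι (circ a₁ (zp circ a₂ k)) * Qf ι astar S a₂ j (m-1-k) := by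
  set g : ℕ → ℕ → H := fun i k => ((-1:ℚ)^i) • (ι (zp circ a₂ k) * Pf ι astar S a₁ a₂ i j (m-1-i-k)) with hg
  rw [Finset.sum_range_succ' (fun i => ((-1:ℚ)^i) • Pf ι astar S a₁ a₂ i j (m-i)) m]
  simp only [pow_zero, one_smul, Nat.sub_zero]
  rw [lem_R0 ι circ astar act S a₁ a₂ hcomm hstar_one_right hstar_rec hact_one hact_rec hS_one hS_rec j m]
  have e : ∀ i ∈ range m, ((-1:ℚ)^(i+1)) • Pf ι astar S a₁ a₂ (i+1) j (m-(i+1))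
      = (∑ k ∈ range (m-1-i), g (i+1) k) - g i 0 - ∑ k ∈ range (m-1-i), g i (k+1) := by
    intro i hi
    have him : i < m := mem_range.mp hi
    have e1 : m - (i+1) = m-1-i := by omega
    rw [e1, lem_R1 ι circ astar act S a₁ a₂ hcomm hstar_one_right hstar_rec hact_one hact_rec
      hS_one hS_rec i j (m-1-i)]
    rw [smul_add, smul_add]
    have t1 : ((-1:ℚ)^(i+1)) • (ι a₂ * Pf ι astar S a₁ a₂ i j (m-1-i)) = - g i 0 := by
      rw [hg]
      simp only [Nat.sub_zero]
      rw [pow_succ, mul_neg_one, neg_smul]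
      rfl
    have t2 : ((-1:ℚ)^(i+1)) • (∑ k ∈ range (m-1-i),
        ι (zp circ a₂ k) * Pf ι astar S a₁ a₂ (i+1) j (m-1-i-1-k))
        = ∑ k ∈ range (m-1-i), g (i+1) k := by
      rw [Finset.smul_sum]
      refine Finset.sum_congr rfl ?_
      intro k _
      rw [hg]
      have : m - 1 - i - 1 - k = m - 1 - (i+1) - k := by omega
      rw [this]
    have t3 : ((-1:ℚ)^(i+1)) • (∑ k ∈ range (m-1-i),
        ι (zp circ a₂ (k+1)) * Pf ι astar S a₁ a₂ i j (m-1-i-1-k))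
        = - ∑ k ∈ range (m-1-i), g i (k+1) := by
      rw [Finset.smul_sum, ← Finset.sum_neg_distrib]
      refine Finset.sum_congr rfl ?_
      intro k _
      rw [hg]
      have : m - 1 - i - 1 - k = m - 1 - i - (k+1) := by omega
      rw [this, pow_succ, mul_neg_one, neg_smul]
    rw [t1, t2, t3]
    abel
  rw [Finset.sum_congr rfl e]
  have e0 : ∑ k ∈ range m, ι (zp circ a₂ k) * Pf ι astar S a₁ a₂ 0 j (m-1-k)
      = ∑ k ∈ range m, g 0 k := by
    refine Finset.sum_congr rfl ?_
    intro k _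
    rw [hg]
    simp only [pow_zero, one_smul, Nat.sub_zero]
  rw [e0]
  have key : (∑ k ∈ range m, g 0 k) + ∑ i ∈ range m, ∑ k ∈ range (m-1-i), g (i+1) k
      = (∑ i ∈ range m, g i 0) + ∑ i ∈ range m, ∑ k ∈ range (m-1-i), g i (k+1) := by
    rw [← tri_peel_outer, ← tri_peel_inner]
  have key2 : ∑ i ∈ range m, ∑ k ∈ range (m-1-i), g (i+1) k
      = ((∑ i ∈ range m, g i 0) + ∑ i ∈ range m, ∑ k ∈ range (m-1-i), g i (k+1))
        - ∑ k ∈ range m, g 0 k := by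
    rw [← key]; abel
  rw [Finset.sum_sub_distrib, Finset.sum_sub_distrib, key2]
  abel



include hcomm hstar_one_left hstar_one_right hstar_rec hact_one hact_rec hS_one hS_rec in
lemma lem_Srx (r : ℚ) : ∀ n : ℕ, S r ((ι a₂)^n)
    = ∑ j ∈ range (n+1), (r^(n-j) * (1-r)^j) • Qf ι astar S a₂ j (n-j) := by
  intro n
  induction n using Nat.strong_induction_on with
  | _ n ih =>
    have zp0 : zp circ a₂ 0 = a₂ := rfl
    rcases n with _ | n'
    ·
      rw [Finset.sum_range_one, pow_zero, hS_one, Qf]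
      simp only [Nat.sub_zero, pow_zero, hS_one 1, hstar_one_left, mul_one, one_smul]
    · -- succ case
      -- abbreviations
      set Q : ℕ → ℕ → H := fun j m => Qf ι astar S a₂ j m with hQ
      -- the two canonical pieces
      set E : H := ∑ j ∈ range (n'+1), (r^(n'-j) * (1-r)^j) • (ι a₂ * Q j (n'-j)) with hE
      set F : H := ∑ k ∈ range n', ∑ j ∈ range (n'-k),
          (r^(n'-j) * (1-r)^j) • (ι (zp circ a₂ (k+1)) * Q j (n'-1-k-j)) with hF
      -- LHS = E + F
      have hLHS : S r ((ι a₂)^(n'+1)) = E + F := by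
        rw [lem_S_pow ι circ act S a₂ hcomm hact_one hact_rec hS_one hS_rec r n']
        have ihrw : ∀ k ∈ range (n'+1), r^k • (ι (zp circ a₂ k) * S r ((ι a₂)^(n'-k)))
            = r^k • (ι (zp circ a₂ k)
                * ∑ j ∈ range (n'-k+1), (r^(n'-k-j) * (1-r)^j) • Q j (n'-k-j)) := by
          intro k _
          rw [ih (n'-k) (by omega)]
        rw [Finset.sum_congr rfl ihrw]
        rw [Finset.sum_range_succ' (fun k => r^k • (ι (zp circ a₂ k)
            * ∑ j ∈ range (n'-k+1), (r^(n'-k-j) * (1-r)^j) • Q j (n'-k-j))) n']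
        have e0 : r^0 • (ι (zp circ a₂ 0)
            * ∑ j ∈ range (n'-0+1), (r^(n'-0-j) * (1-r)^j) • Q j (n'-0-j)) = E := by
          simp only [pow_zero, one_smul, Nat.sub_zero, zp0, hE]
          rw [Finset.mul_sum]
          refine Finset.sum_congr rfl ?_
          intro j _
          rw [mul_smul_comm]
        have e1 : ∀ k ∈ range n', r^(k+1) • (ι (zp circ a₂ (k+1))
            * ∑ j ∈ range (n'-(k+1)+1), (r^(n'-(k+1)-j) * (1-r)^j) • Q j (n'-(k+1)-j))
            = ∑ j ∈ range (n'-k), (r^(n'-j) * (1-r)^j) • (ι (zp circ a₂ (k+1)) * Q j (n'-1-k-j)) := by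
          intro k hk
          have hkn : k < n' := mem_range.mp hk
          have eb : n'-(k+1)+1 = n'-k := by omega
          rw [eb, Finset.mul_sum, Finset.smul_sum]
          refine Finset.sum_congr rfl ?_
          intro j hj
          have hjk : j < n'-k := mem_range.mp hj
          rw [mul_smul_comm, smul_smul]
          have e2 : n'-(k+1)-j = n'-1-k-j := by omega
          have e3 : r^(k+1) * (r^(n'-1-k-j) * (1-r)^j) = r^(n'-j) * (1-r)^j := by
            have e4 : n'-j = (k+1) + (n'-1-k-j) := by omega
            rw [e4, pow_add]; ring
          rw [e2, e3]
        rw [Finset.sum_congr rfl e1, e0, add_comm, hF]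
      rw [hLHS]
      -- now expand the RHS target into E + F
      have hc : ∀ j ≤ n', r^(n'+1-j) * (1-r)^j + r^(n'-j) * (1-r)^(j+1) = r^(n'-j) * (1-r)^j := by
        intro j hj
        have e4 : n'+1-j = (n'-j)+1 := by omega
        rw [e4, pow_succ, pow_succ]; ring
      -- peel j = 0
      rw [Finset.sum_range_succ' (fun j => (r^(n'+1-j) * (1-r)^j) • Q j (n'+1-j)) (n'+1)]
      -- expand Q 0 (n'+1)
      have hQ0 : Q 0 (n'+1) = ∑ k ∈ range (n'+1), ι (zp circ a₂ k) * Q 0 (n'-k) := by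
        rw [hQ]
        simp only
        rw [lem_Q0 ι astar S a₂ hstar_one_left,
          lem_S_pow ι circ act S a₂ hcomm hact_one hact_rec hS_one hS_rec 1 n']
        refine Finset.sum_congr rfl ?_
        intro k _
        rw [one_pow, one_smul, lem_Q0 ι astar S a₂ hstar_one_left]
      have hA : (r^(n'+1-0) * (1-r)^0) • Q 0 (n'+1-0)
          = (∑ k ∈ range n', (r^(n'+1) * (1-r)^(0:ℕ)) • (ι (zp circ a₂ (k+1)) * Q 0 (n'-1-k)))
            + (r^(n'+1) * (1-r)^(0:ℕ)) • (ι a₂ * Q 0 n') := by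
        simp only [Nat.sub_zero]
        rw [hQ0, Finset.smul_sum]
        rw [Finset.sum_range_succ' (fun k => (r^(n'+1) * (1-r)^(0:ℕ)) • (ι (zp circ a₂ k) * Q 0 (n'-k))) n']
        simp only [zp0, Nat.sub_zero]
        congr 1
        refine Finset.sum_congr rfl ?_
        intro k _
        have : n'-(k+1) = n'-1-k := by omega
        rw [this]
      rw [hA]
      -- expand Q (j+1) (n'+1-(j+1)) via QR1
      have hQR : ∀ j ∈ range (n'+1), (r^(n'+1-(j+1)) * (1-r)^(j+1)) • Q (j+1) (n'+1-(j+1))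
          = (r^(n'-j) * (1-r)^(j+1)) • (ι a₂ * Q j (n'-j))
            + ∑ k ∈ range (n'-j), (r^(n'-j) * (1-r)^(j+1)) • (ι (zp circ a₂ k) * Q (j+1) (n'-1-j-k))
            + ∑ k ∈ range (n'-j), (r^(n'-j) * (1-r)^(j+1)) • (ι (zp circ a₂ (k+1)) * Q j (n'-1-j-k)) := by
        intro j _
        have e5 : n'+1-(j+1) = n'-j := by omega
        rw [e5, hQ]
        simp only
        rw [lem_QR1 ι circ astar act S a₂ hcomm hstar_one_right hstar_rec hact_one hact_rec
          hS_one hS_rec j (n'-j)]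
        rw [smul_add, smul_add, Finset.smul_sum, Finset.smul_sum]
        congr 1
        · congr 1
          refine Finset.sum_congr rfl ?_
          intro k _
          have : n'-j-1-k = n'-1-j-k := by omega
          rw [this]
        · refine Finset.sum_congr rfl ?_
          intro k _
          have : n'-j-1-k = n'-1-j-k := by omega
          rw [this]
      rw [Finset.sum_congr rfl hQR, Finset.sum_add_distrib, Finset.sum_add_distrib]
      -- name the resulting pieces
      set B : H := ∑ j ∈ range (n'+1), (r^(n'-j) * (1-r)^(j+1)) • (ι a₂ * Q j (n'-j)) with hB
      set C : H := ∑ j ∈ range (n'+1), ∑ k ∈ range (n'-j),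
          (r^(n'-j) * (1-r)^(j+1)) • (ι (zp circ a₂ k) * Q (j+1) (n'-1-j-k)) with hC
      set D : H := ∑ j ∈ range (n'+1), ∑ k ∈ range (n'-j),
          (r^(n'-j) * (1-r)^(j+1)) • (ι (zp circ a₂ (k+1)) * Q j (n'-1-j-k)) with hD
      set A1 : H := ∑ k ∈ range n', (r^(n'+1) * (1-r)^(0:ℕ)) • (ι (zp circ a₂ (k+1)) * Q 0 (n'-1-k)) with hA1
      set A0 : H := (r^(n'+1) * (1-r)^(0:ℕ)) • (ι a₂ * Q 0 n') with hA0
      -- split C into its k=0 slice and the rest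
      have hCsplit : C = (∑ j ∈ range n', (r^(n'-j) * (1-r)^(j+1)) • (ι a₂ * Q (j+1) (n'-1-j)))
          + ∑ j ∈ range n', ∑ k ∈ range (n'-1-j),
              (r^(n'-j) * (1-r)^(j+1)) • (ι (zp circ a₂ (k+1)) * Q (j+1) (n'-1-j-(k+1))) := by
        rw [hC, Finset.sum_range_succ]
        simp only [Nat.sub_self, range_zero, Finset.sum_empty, add_zero]
        rw [tri_peel_inner (fun j k => (r^(n'-j) * (1-r)^(j+1)) • (ι (zp circ a₂ k) * Q (j+1) (n'-1-j-k))) n']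
        simp only [zp0, Nat.sub_zero]
      rw [hCsplit]
      -- group the z₀ terms: A0 + (k=0 slice of C) + B = E
      have hz0 : A0 + ((∑ j ∈ range n', (r^(n'-j) * (1-r)^(j+1)) • (ι a₂ * Q (j+1) (n'-1-j))) + B) = E := by
        have hG : A0 + ∑ j ∈ range n', (r^(n'-j) * (1-r)^(j+1)) • (ι a₂ * Q (j+1) (n'-1-j))
            = ∑ j ∈ range (n'+1), (r^(n'+1-j) * (1-r)^j) • (ι a₂ * Q j (n'-j)) := by
          rw [Finset.sum_range_succ' (fun j => (r^(n'+1-j) * (1-r)^j) • (ι a₂ * Q j (n'-j))) n']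
          rw [add_comm]
          congr 1
          · refine Finset.sum_congr rfl ?_
            intro j hj
            have hjn : j < n' := mem_range.mp hj
            have e6 : n'+1-(j+1) = n'-j := by omega
            have e7 : n'-(j+1) = n'-1-j := by omega
            rw [e6, e7]
        rw [← add_assoc, hG, hB, ← Finset.sum_add_distrib]
        rw [hE]
        refine Finset.sum_congr rfl ?_
        intro j hj
        have hjn : j ≤ n' := Nat.lt_succ_iff.mp (mem_range.mp hj)
        rw [← add_smul, hc j hjn]
      -- group the z_{k+1} terms: A1 + (rest of C) + D = F
      have hzk : A1 + ((∑ j ∈ range n', ∑ k ∈ range (n'-1-j),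
            (r^(n'-j) * (1-r)^(j+1)) • (ι (zp circ a₂ (k+1)) * Q (j+1) (n'-1-j-(k+1)))) + D) = F := by
        -- swap the C-rest double sum
        have hC1 : ∑ j ∈ range n', ∑ k ∈ range (n'-1-j),
              (r^(n'-j) * (1-r)^(j+1)) • (ι (zp circ a₂ (k+1)) * Q (j+1) (n'-1-j-(k+1)))
            = ∑ k ∈ range n', ∑ j ∈ range (n'-1-k),
              (r^(n'-j) * (1-r)^(j+1)) • (ι (zp circ a₂ (k+1)) * Q (j+1) (n'-1-k-(j+1))) := by
          rw [tri_swap' (fun j k => (r^(n'-j) * (1-r)^(j+1)) • (ι (zp circ a₂ (k+1)) * Q (j+1) (n'-1-j-(k+1)))) n']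
          refine Finset.sum_congr rfl ?_
          intro k _
          refine Finset.sum_congr rfl ?_
          intro j _
          have : n'-1-j-(k+1) = n'-1-k-(j+1) := by omega
          rw [this]
        -- swap D
        have hD1 : D = ∑ k ∈ range n', ∑ j ∈ range (n'-k),
            (r^(n'-j) * (1-r)^(j+1)) • (ι (zp circ a₂ (k+1)) * Q j (n'-1-k-j)) := by
          rw [hD, Finset.sum_range_succ]
          simp only [Nat.sub_self, range_zero, Finset.sum_empty, add_zero]
          rw [tri_swap_s12 (fun j k => (r^(n'-j) * (1-r)^(j+1)) • (ι (zp circ a₂ (k+1)) * Q j (n'-1-j-k))) n']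
          refine Finset.sum_congr rfl ?_
          intro k _
          refine Finset.sum_congr rfl ?_
          intro j _
          have : n'-1-j-k = n'-1-k-j := by omega
          rw [this]
        rw [hC1, hD1, hA1, ← Finset.sum_add_distrib, ← Finset.sum_add_distrib, hF]
        refine Finset.sum_congr rfl ?_
        intro k hk
        have hkn : k < n' := mem_range.mp hk
        -- combine A1-entry and C1-entries into one sum over j < n'-k with coefficient r^{n'+1-j}(1-r)^j
        have hG2 : (r^(n'+1) * (1-r)^(0:ℕ)) • (ι (zp circ a₂ (k+1)) * Q 0 (n'-1-k))
              + ∑ j ∈ range (n'-1-k),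
                (r^(n'-j) * (1-r)^(j+1)) • (ι (zp circ a₂ (k+1)) * Q (j+1) (n'-1-k-(j+1)))
            = ∑ j ∈ range (n'-k), (r^(n'+1-j) * (1-r)^j) • (ι (zp circ a₂ (k+1)) * Q j (n'-1-k-j)) := by
          have eb2 : n'-k = (n'-1-k)+1 := by omega
          rw [eb2, Finset.sum_range_succ' (fun j => (r^(n'+1-j) * (1-r)^j) • (ι (zp circ a₂ (k+1)) * Q j (n'-1-k-j))) (n'-1-k)]
          rw [add_comm]
          congr 1
          · refine Finset.sum_congr rfl ?_
            intro j hj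
            have hjn : j < n'-1-k := mem_range.mp hj
            have e8 : n'+1-(j+1) = n'-j := by omega
            rw [e8]
        rw [← add_assoc, hG2, ← Finset.sum_add_distrib]
        refine Finset.sum_congr rfl ?_
        intro j hj
        have hjn : j < n'-k := mem_range.mp hj
        rw [← add_smul]
        congr 1
        have hj' : j ≤ n' := by omega
        exact hc j hj'
      rw [← hz0, ← hzk]
      abel

end Rec
end Harm

theorem Sr_mul_pow_right
    {Z H : Type*} [AddCommGroup Z] [Module ℚ Z] [Ring H] [Algebra ℚ H]
    (ι : Z →ₗ[ℚ] H)
    (circ : Z →ₗ[ℚ] Z →ₗ[ℚ] Z)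
    (hcomm : ∀ a b : Z, circ a b = circ b a)
    (hassoc : ∀ a b c : Z, circ (circ a b) c = circ a (circ b c))
    (astar : H →ₗ[ℚ] H →ₗ[ℚ] H)
    (hstar_one_left : ∀ w : H, astar 1 w = w)
    (hstar_one_right : ∀ w : H, astar w 1 = w)
    (hstar_rec : ∀ (a b : Z) (w₁ w₂ : H),
      astar (ι a * w₁) (ι b * w₂) =
        ι a * astar w₁ (ι b * w₂) + ι b * astar (ι a * w₁) w₂ + ι (circ a b) * astar w₁ w₂)
    (act : Z →ₗ[ℚ] H →ₗ[ℚ] H)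
    (hact_one : ∀ a : Z, act a 1 = 0)
    (hact_rec : ∀ (a b : Z) (w : H), act a (ι b * w) = ι (circ a b) * w)
    (S : ℚ → H →ₗ[ℚ] H)
    (hS_one : ∀ r : ℚ, S r 1 = 1)
    (hS_rec : ∀ (r : ℚ) (a : Z) (w : H), S r (ι a * w) = ι a * S r w + r • act a (S r w))
    (r : ℚ) (a₁ a₂ : Z) (q : ℕ) (hq : 1 ≤ q) :
    S r (ι a₁ * (ι a₂) ^ q) =
      ∑ i ∈ Finset.range (q + 1), ∑ j ∈ Finset.range (q + 1 - i),
        ((-1 : ℚ) ^ i * r ^ (q - j) * (1 - r) ^ j) •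
          astar ((ι a₂) ^ i * ι a₁ * (ι a₂) ^ j) (S 1 ((ι a₂) ^ (q - i - j))) := by
  obtain ⟨q', rfl⟩ : ∃ q', q = q'+1 := ⟨q-1, by omega⟩
  set Q : ℕ → ℕ → H := fun j m => Qf ι astar S a₂ j m with hQdef
  -- canonical form of both sides
  set W : H := ι a₁ * ∑ j ∈ range (q'+2), (r^(q'+1-j) * (1-r)^j) • Q j (q'+1-j) with hW
  set V : H := ∑ k ∈ range (q'+1), ∑ j ∈ range (q'+1-k),
      (r^(q'+1-j) * (1-r)^j) • (ι (circ a₁ (zp circ a₂ k)) * Q j (q'-j-k)) with hV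
  -- LHS = W + V
  have hLHS : S r (ι a₁ * (ι a₂)^(q'+1)) = W + V := by
    rw [hS_rec r a₁ ((ι a₂)^(q'+1))]
    have hact : act a₁ (S r ((ι a₂)^(q'+1)))
        = ∑ k ∈ range (q'+1), r^k • (ι (circ a₁ (zp circ a₂ k)) * S r ((ι a₂)^(q'-k))) := by
      rw [lem_S_pow ι circ act S a₂ hcomm hact_one hact_rec hS_one hS_rec r q', map_sum]
      refine Finset.sum_congr rfl ?_
      intro k _
      rw [map_smul, hact_rec]
    rw [hact, lem_Srx ι circ astar act S a₂ hcomm hstar_one_left hstar_one_right hstar_rec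
      hact_one hact_rec hS_one hS_rec r (q'+1)]
    congr 1
    rw [hV, Finset.smul_sum]
    refine Finset.sum_congr rfl ?_
    intro k hk
    have hkq : k < q'+1 := mem_range.mp hk
    rw [lem_Srx ι circ astar act S a₂ hcomm hstar_one_left hstar_one_right hstar_rec
      hact_one hact_rec hS_one hS_rec r (q'-k)]
    have eb : q'-k+1 = q'+1-k := by omega
    rw [smul_smul, eb, Finset.mul_sum, Finset.smul_sum]
    refine Finset.sum_congr rfl ?_
    intro j hj
    have hjq : j < q'+1-k := mem_range.mp hj
    rw [mul_smul_comm, smul_smul]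
    have e1 : r * r^k * (r^(q'-k-j) * (1-r)^j) = r^(q'+1-j) * (1-r)^j := by
      have e2 : q'+1-j = (k+1) + (q'-k-j) := by omega
      rw [e2, pow_add, pow_succ']; ring
    have e3 : q'-k-j = q'-j-k := by omega
    rw [e1, e3]
  rw [hLHS]
  -- RHS = W + V
  have swap1 : ∑ i ∈ range (q'+1+1), ∑ j ∈ range (q'+1+1-i),
        ((-1:ℚ)^i * r^(q'+1-j) * (1-r)^j) •
          astar ((ι a₂)^i * ι a₁ * (ι a₂)^j) (S 1 ((ι a₂)^(q'+1-i-j)))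
      = ∑ j ∈ range (q'+2), ∑ i ∈ range (q'+2-j),
        ((-1:ℚ)^i * r^(q'+1-j) * (1-r)^j) •
          astar ((ι a₂)^i * ι a₁ * (ι a₂)^j) (S 1 ((ι a₂)^(q'+1-i-j))) :=
    tri_swap_s12 (fun i j => ((-1:ℚ)^i * r^(q'+1-j) * (1-r)^j) •
          astar ((ι a₂)^i * ι a₁ * (ι a₂)^j) (S 1 ((ι a₂)^(q'+1-i-j)))) (q'+2)
  rw [swap1]
  have inner : ∀ j ∈ range (q'+2), ∑ i ∈ range (q'+2-j),
        ((-1:ℚ)^i * r^(q'+1-j) * (1-r)^j) •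
          astar ((ι a₂)^i * ι a₁ * (ι a₂)^j) (S 1 ((ι a₂)^(q'+1-i-j)))
      = (r^(q'+1-j) * (1-r)^j) • (ι a₁ * Q j (q'+1-j)
          + ∑ k ∈ range (q'+1-j), ι (circ a₁ (zp circ a₂ k)) * Q j (q'+1-j-1-k)) := by
    intro j hj
    have hjq : j ≤ q'+1 := Nat.lt_succ_iff.mp (mem_range.mp hj)
    rw [← lem_A ι circ astar act S a₁ a₂ hcomm hstar_one_right hstar_rec hact_one hact_rec
      hS_one hS_rec j (q'+1-j), Finset.smul_sum]
    have eb2 : q'+2-j = (q'+1-j)+1 := by omega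
    rw [eb2]
    refine Finset.sum_congr rfl ?_
    intro i hi
    have hiq : i < (q'+1-j)+1 := mem_range.mp hi
    rw [smul_smul]
    have e4 : q'+1-i-j = q'+1-j-i := by omega
    have e5 : (r^(q'+1-j) * (1-r)^j) * (-1:ℚ)^i = (-1:ℚ)^i * r^(q'+1-j) * (1-r)^j := by ring
    rw [e4, e5]
    rfl
  rw [Finset.sum_congr rfl inner]
  have expand : ∀ j ∈ range (q'+2), (r^(q'+1-j) * (1-r)^j) • (ι a₁ * Q j (q'+1-j)
          + ∑ k ∈ range (q'+1-j), ι (circ a₁ (zp circ a₂ k)) * Q j (q'+1-j-1-k))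
      = (ι a₁ * ((r^(q'+1-j) * (1-r)^j) • Q j (q'+1-j)))
        + ∑ k ∈ range (q'+1-j), (r^(q'+1-j) * (1-r)^j) •
            (ι (circ a₁ (zp circ a₂ k)) * Q j (q'-j-k)) := by
    intro j _
    rw [smul_add, mul_smul_comm, Finset.smul_sum]
    congr 1
    refine Finset.sum_congr rfl ?_
    intro k _
    have : q'+1-j-1-k = q'-j-k := by omega
    rw [this]
  rw [Finset.sum_congr rfl expand, Finset.sum_add_distrib]
  congr 1
  · rw [hW, Finset.mul_sum]
  · -- remaining: double sum equals V after dropping empty last term and swapping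
    rw [Finset.sum_range_succ]
    simp only [Nat.sub_self, range_zero, Finset.sum_empty, add_zero]
    have : ∀ j ∈ range (q'+1), ∑ k ∈ range (q'+1-j), (r^(q'+1-j) * (1-r)^j) •
            (ι (circ a₁ (zp circ a₂ k)) * Q j (q'-j-k))
        = ∑ k ∈ range (q'+1-j), (fun j k => (r^(q'+1-j) * (1-r)^j) •
            (ι (circ a₁ (zp circ a₂ k)) * Q j (q'-j-k))) j k := by
      intro j _; rfl
    rw [Finset.sum_congr rfl this,
      tri_swap_s12 (fun j k => (r^(q'+1-j) * (1-r)^j) •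
            (ι (circ a₁ (zp circ a₂ k)) * Q j (q'-j-k))) (q'+1), hV]
end

section
/- For any integer k ≥ 2 and any positive integer n, the alternating convolution sum over i from 0 to n of (-1)^i * ζ({k}^i) * ζ^⋆({k}^(n-i)) equals 0, where ζ({k}^i) = ζ(k,…,k) (i repetitions) is a multiple zeta value and ζ^⋆({k}^(n-i)) is a multiple zeta-star value; for n = 0 the sum equals 1. -/
/-- Multiple zeta value `ζ(k₁,…,kₙ)` of an index given as a list:
sum over strictly decreasing tuples of positive integers. -/
noncomputable def mzv (ks : List ℕ) : ℝ :=
  ∑' m : {m : Fin ks.length → ℕ //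
      (∀ i j : Fin ks.length, i < j → m j < m i) ∧ ∀ i, 0 < m i},
    ∏ i, ((m.1 i : ℝ) ^ ks.get i)⁻¹

/-- Multiple zeta-star value `ζ⋆(k₁,…,kₙ)`: weakly decreasing summation. -/
noncomputable def mzvStar (ks : List ℕ) : ℝ :=
  ∑' m : {m : Fin ks.length → ℕ //
      (∀ i j : Fin ks.length, i < j → m j ≤ m i) ∧ ∀ i, 0 < m i},
    ∏ i, ((m.1 i : ℝ) ^ ks.get i)⁻¹

/-- Multiple t-value `t(k₁,…,kₙ)`: summation over odd positive integers,
strictly decreasing. -/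
noncomputable def mtv (ks : List ℕ) : ℝ :=
  ∑' m : {m : Fin ks.length → ℕ //
      (∀ i j : Fin ks.length, i < j → m j < m i) ∧ (∀ i, 0 < m i) ∧ ∀ i, Odd (m i)},
    ∏ i, ((m.1 i : ℝ) ^ ks.get i)⁻¹

/-- Multiple t-star value `t⋆(k₁,…,kₙ)`: odd summation variables, weakly decreasing. -/
noncomputable def mtvStar (ks : List ℕ) : ℝ :=
  ∑' m : {m : Fin ks.length → ℕ //
      (∀ i j : Fin ks.length, i < j → m j ≤ m i) ∧ (∀ i, 0 < m i) ∧ ∀ i, Odd (m i)},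
    ∏ i, ((m.1 i : ℝ) ^ ks.get i)⁻¹

/-- All indices obtained from `ks` by replacing each comma by a comma or a plus
(i.e. merging consecutive entries). -/
def contractions : List ℕ → List (List ℕ)
  | [] => [[]]
  | [k] => [[k]]
  | k :: k' :: t =>
      (contractions (k' :: t)).map (fun p => k :: p) ++ contractions ((k + k') :: t)
termination_by l => l.length
decreasing_by all_goals simp

/-- Interpolated multiple zeta value `ζ^r(k₁,…,kₙ)`. -/
noncomputable def interpZeta (r : ℝ) (ks : List ℕ) : ℝ :=
  ((contractions ks).map (fun p => r ^ (ks.length - p.length) * mzv p)).sum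

/-- Interpolated multiple t-value `t^r(k₁,…,kₙ)`. -/
noncomputable def interpT (r : ℝ) (ks : List ℕ) : ℝ :=
  ((contractions ks).map (fun p => r ^ (ks.length - p.length) * mtv p)).sum

namespace ZAC

noncomputable def wt (k : ℕ) (l : List ℕ) : ℝ := (l.map fun x : ℕ => ((x:ℝ)^k)⁻¹).prod

@[simp] lemma wt_nil (k : ℕ) : wt k [] = 1 := rfl

@[simp] lemma wt_cons (k x : ℕ) (l : List ℕ) : wt k (x :: l) = ((x:ℝ)^k)⁻¹ * wt k l := by
  simp [wt]

lemma wt_nonneg (k : ℕ) (l : List ℕ) : 0 ≤ wt k l := by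
  induction l with
  | nil => norm_num
  | cons x l ih => simp only [wt_cons]; positivity

def SL (R : ℕ → ℕ → Prop) (i : ℕ) :=
  {l : List ℕ // l.length = i ∧ l.Pairwise R ∧ ∀ x ∈ l, 0 < x}

def listEquiv (R : ℕ → ℕ → Prop) (i : ℕ) :
    {m : Fin i → ℕ // (∀ a b : Fin i, a < b → R (m a) (m b)) ∧ ∀ a, 0 < m a} ≃
      SL R i where
  toFun m := ⟨List.ofFn m.1, by
    refine ⟨by simp, List.pairwise_ofFn.2 fun a b h => m.2.1 a b h, ?_⟩
    intro x hx
    simp only [List.mem_ofFn, Set.mem_range] at hx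
    obtain ⟨a, rfl⟩ := hx
    exact m.2.2 a⟩
  invFun l := ⟨fun j => l.1.get (Fin.cast l.2.1.symm j), by
    obtain ⟨l, hlen, hp, hpos⟩ := l
    refine ⟨?_, fun a => hpos _ (List.get_mem l _)⟩
    intro a b hab
    subst hlen
    exact List.pairwise_iff_get.mp hp _ _ hab⟩
  left_inv m := by
    ext j
    simp [List.get_ofFn]
  right_inv l := by
    obtain ⟨l, hlen, hp, hpos⟩ := l
    subst hlen
    simp [Fin.cast, List.ofFn_get]
    rfl

lemma wt_ofFn (k i : ℕ) (f : Fin i → ℕ) :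
    wt k (List.ofFn f) = ∏ j, ((f j : ℝ)^k)⁻¹ := by
  rw [wt, List.map_ofFn, List.prod_ofFn]
  rfl

lemma wt_listEquiv (R : ℕ → ℕ → Prop) (i k : ℕ)
    (m : {m : Fin i → ℕ // (∀ a b : Fin i, a < b → R (m a) (m b)) ∧ ∀ a, 0 < m a}) :
    wt k ((listEquiv R i m).1) = ∏ j, ((m.1 j : ℝ)^k)⁻¹ :=
  wt_ofFn k i m.1

lemma mzv_eq (k : ℕ) (ks : List ℕ) (hks : ∀ j, ks.get j = k) :
    mzv ks = ∑' l : SL (· > ·) ks.length, wt k l.1 := by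
  rw [mzv, ← (listEquiv (· > ·) ks.length).tsum_eq (fun l => wt k l.1)]
  apply tsum_congr
  intro m
  rw [wt_listEquiv]
  exact Finset.prod_congr rfl fun j _ => by rw [hks j]

lemma mzvStar_eq (k : ℕ) (ks : List ℕ) (hks : ∀ j, ks.get j = k) :
    mzvStar ks = ∑' l : SL (· ≥ ·) ks.length, wt k l.1 := by
  rw [mzvStar, ← (listEquiv (· ≥ ·) ks.length).tsum_eq (fun l => wt k l.1)]
  apply tsum_congr
  intro m
  rw [wt_listEquiv]
  exact Finset.prod_congr rfl fun j _ => by rw [hks j]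

lemma summable_pi (k : ℕ) (hk : 2 ≤ k) (i : ℕ) :
    Summable (fun m : Fin i → ℕ => ∏ j, ((m j : ℝ)^k)⁻¹) := by
  induction i with
  | zero =>
      simp only [Finset.univ_eq_empty, Finset.prod_empty]
      exact summable_of_finite_support (Set.toFinite _)
  | succ i ih =>
      have base : Summable (fun n : ℕ => ((n : ℝ)^k)⁻¹) :=
        Real.summable_nat_pow_inv.2 (by omega)
      have hn1 : 0 ≤ (fun n : ℕ => ((n : ℝ)^k)⁻¹) :=
        Pi.le_def.mpr fun n => by positivity
      have hn2 : 0 ≤ (fun m : Fin i → ℕ => ∏ j, ((m j : ℝ)^k)⁻¹) :=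
        Pi.le_def.mpr fun m => Finset.prod_nonneg fun j _ => by positivity
      have h2 : Summable (fun p : ℕ × (Fin i → ℕ) =>
          ((p.1 : ℝ)^k)⁻¹ * ∏ j, ((p.2 j : ℝ)^k)⁻¹) :=
        Summable.mul_of_nonneg (f := fun n : ℕ => ((n : ℝ)^k)⁻¹)
          (g := fun m : Fin i → ℕ => ∏ j, ((m j : ℝ)^k)⁻¹) base ih hn1 hn2
      have key : Summable ((fun m : Fin (i+1) → ℕ => ∏ j, ((m j : ℝ)^k)⁻¹) ∘
          Fin.consEquiv (fun _ : Fin (i+1) => ℕ)) := by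
        apply h2.congr
        intro p
        simp [Fin.consEquiv, Fin.prod_univ_succ, mul_comm]
      exact (Equiv.summable_iff _).mp key


lemma summable_SL (R : ℕ → ℕ → Prop) (k : ℕ) (hk : 2 ≤ k) (i : ℕ) :
    Summable (fun l : SL R i => wt k l.1) := by
  rw [← Equiv.summable_iff (listEquiv R i)]
  have h := (summable_pi k hk i).comp_injective (Subtype.val_injective
    (p := fun m : Fin i → ℕ => (∀ a b : Fin i, a < b → R (m a) (m b)) ∧ ∀ a, 0 < m a))
  apply h.congr
  intro m
  exact (wt_listEquiv R i k m).symm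

lemma prod_eq (k : ℕ) (hk : 2 ≤ k) (i j : ℕ) :
    mzv (List.replicate i k) * mzvStar (List.replicate j k)
      = ∑' p : SL (· > ·) i × SL (· ≥ ·) j, wt k p.1.1 * wt k p.2.1 := by
  rw [mzv_eq k _ (fun j => by simp), mzvStar_eq k _ (fun j => by simp),
    List.length_replicate, List.length_replicate]
  exact Summable.tsum_mul_tsum (summable_SL _ k hk i) (summable_SL _ k hk j)
    (Summable.mul_of_nonneg (f := fun l : SL (· > ·) i => wt k l.1)
      (g := fun l : SL (· ≥ ·) j => wt k l.1) (summable_SL _ k hk i) (summable_SL _ k hk j)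
      (Pi.le_def.mpr fun l => wt_nonneg k l.1) (Pi.le_def.mpr fun l => wt_nonneg k l.1))


lemma summable_pair (k : ℕ) (hk : 2 ≤ k) (i j : ℕ) :
    Summable (fun p : SL (· > ·) i × SL (· ≥ ·) j => wt k p.1.1 * wt k p.2.1) :=
  Summable.mul_of_nonneg (f := fun l : SL (· > ·) i => wt k l.1)
    (g := fun l : SL (· ≥ ·) j => wt k l.1) (summable_SL _ k hk i) (summable_SL _ k hk j)
    (Pi.le_def.mpr fun l => wt_nonneg k l.1) (Pi.le_def.mpr fun l => wt_nonneg k l.1)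

def Inv (n : ℕ) (p : List ℕ × List ℕ) : Prop :=
  p.1.length + p.2.length = n ∧ p.1.Pairwise (· > ·) ∧ p.2.Pairwise (· ≥ ·) ∧
    (∀ x ∈ p.1, 0 < x) ∧ ∀ x ∈ p.2, 0 < x

def State (n : ℕ) := {p : List ℕ × List ℕ // Inv n p}

noncomputable def F (k n : ℕ) (s : State n) : ℝ :=
  (-1)^s.1.1.length * (wt k s.1.1 * wt k s.1.2)

def sigEquiv (n : ℕ) :
    ((i : Fin (n+1)) × (SL (· > ·) i.1 × SL (· ≥ ·) (n - i.1))) ≃ State n where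
  toFun x := ⟨(x.2.1.1, x.2.2.1), by
    obtain ⟨⟨i, hi⟩, ⟨a, ha1, ha2, ha3⟩, ⟨b, hb1, hb2, hb3⟩⟩ := x
    exact ⟨by simp only [ha1, hb1]; omega, ha2, hb2, ha3, hb3⟩⟩
  invFun s := ⟨⟨s.1.1.length, by have := s.2.1; omega⟩,
    ⟨s.1.1, rfl, s.2.2.1, s.2.2.2.2.1⟩,
    ⟨s.1.2, by have := s.2.1; show s.1.2.length = n - s.1.1.length; omega,
      s.2.2.2.1, s.2.2.2.2.2⟩⟩
  left_inv x := by
    obtain ⟨⟨i, hi⟩, ⟨a, ha⟩, ⟨b, hb⟩⟩ := x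
    have h' : a.length = i := ha.1
    subst h'
    rfl
  right_inv s := Subtype.ext rfl

lemma step1 (k : ℕ) (hk : 2 ≤ k) (n : ℕ) :
    ∑ i ∈ Finset.range (n + 1),
        (-1 : ℝ) ^ i * mzv (List.replicate i k) * mzvStar (List.replicate (n - i) k) =
      ∑' s : State n, F k n s := by
  rw [← (sigEquiv n).tsum_eq (F k n)]
  have hG : ∀ x : (i : Fin (n+1)) × (SL (· > ·) i.1 × SL (· ≥ ·) (n - i.1)),
      F k n (sigEquiv n x) = (-1 : ℝ)^(x.1 : ℕ) * (wt k x.2.1.1 * wt k x.2.2.1) := by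
    rintro ⟨i, ⟨a, ha⟩, ⟨b, hb⟩⟩
    show (-1 : ℝ)^(a.length) * (wt k a * wt k b) = (-1 : ℝ)^(i : ℕ) * (wt k a * wt k b)
    rw [ha.1]
  have hsum : Summable (fun x : (i : Fin (n+1)) × (SL (· > ·) i.1 × SL (· ≥ ·) (n - i.1)) =>
      F k n (sigEquiv n x)) := by
    rw [← summable_abs_iff]
    have habs : ∀ x : (i : Fin (n+1)) × (SL (· > ·) i.1 × SL (· ≥ ·) (n - i.1)),
        |F k n (sigEquiv n x)| = wt k x.2.1.1 * wt k x.2.2.1 := by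
      intro x
      rw [hG x, abs_mul, abs_pow, abs_neg, abs_one, one_pow, one_mul,
        abs_of_nonneg (mul_nonneg (wt_nonneg _ _) (wt_nonneg _ _))]
    refine Summable.congr ?_ (fun x => (habs x).symm)
    refine (summable_sigma_of_nonneg ?_).2 ⟨?_, ?_⟩
    · intro x; exact mul_nonneg (wt_nonneg _ _) (wt_nonneg _ _)
    · intro i; exact summable_pair k hk i.1 (n - i.1)
    · exact (hasSum_fintype _).summable
  rw [Summable.tsum_sigma hsum, tsum_fintype]
  rw [← Fin.sum_univ_eq_sum_range (fun i =>
      (-1 : ℝ) ^ i * mzv (List.replicate i k) * mzvStar (List.replicate (n - i) k)) (n+1)]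
  apply Finset.sum_congr rfl
  intro i _
  have : ∑' p : SL (· > ·) i.1 × SL (· ≥ ·) (n - i.1), F k n (sigEquiv n ⟨i, p⟩)
      = (-1 : ℝ)^(i : ℕ) * ∑' p : SL (· > ·) i.1 × SL (· ≥ ·) (n - i.1),
          wt k p.1.1 * wt k p.2.1 := by
    rw [← tsum_mul_left]
    exact tsum_congr fun p => hG ⟨i, p⟩
  rw [this, ← prod_eq k hk, mul_assoc]


def rawMove : List ℕ × List ℕ → List ℕ × List ℕ
  | ([], []) => ([], [])
  | (x :: a', []) => (a', [x])
  | ([], y :: b') => ([y], b')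
  | (x :: a', y :: b') => if y ≤ x then (a', x :: y :: b') else (y :: x :: a', b')

lemma inv_rawMove (n : ℕ) (a b : List ℕ) (h : Inv n (a, b)) : Inv n (rawMove (a, b)) := by
  obtain ⟨hlen, hpa, hpb, hposa, hposb⟩ := h
  match a, b with
  | [], [] => exact ⟨hlen, hpa, hpb, hposa, hposb⟩
  | x :: a', [] =>
      simp only [rawMove]
      refine ⟨by simp at hlen ⊢; omega, (List.pairwise_cons.mp hpa).2, by simp, ?_, ?_⟩
      · intro z hz; exact hposa z (List.mem_cons_of_mem x hz)
      · intro z hz; simp at hz; subst hz; exact hposa _ List.mem_cons_self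
  | [], y :: b' =>
      simp only [rawMove]
      refine ⟨by simp at hlen ⊢; omega, by simp, (List.pairwise_cons.mp hpb).2, ?_, ?_⟩
      · intro z hz; simp at hz; subst hz; exact hposb _ List.mem_cons_self
      · intro z hz; exact hposb z (List.mem_cons_of_mem y hz)
  | x :: a', y :: b' =>
      simp only [rawMove]
      obtain ⟨hxa, hpa'⟩ := List.pairwise_cons.mp hpa
      obtain ⟨hyb, hpb'⟩ := List.pairwise_cons.mp hpb
      split_ifs with hxy
      · refine ⟨by simp at hlen ⊢; omega, hpa', ?_, ?_, ?_⟩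
        · refine List.pairwise_cons.mpr ⟨?_, hpb⟩
          intro z hz
          rcases List.mem_cons.mp hz with rfl | hz
          · exact hxy
          · exact le_trans (hyb z hz) hxy
        · intro z hz; exact hposa z (List.mem_cons_of_mem x hz)
        · intro z hz
          rcases List.mem_cons.mp hz with rfl | hz
          · exact hposa z List.mem_cons_self
          · exact hposb z hz
      · push_neg at hxy
        refine ⟨by simp at hlen ⊢; omega, ?_, hpb', ?_, ?_⟩
        · refine List.pairwise_cons.mpr ⟨?_, hpa⟩
          intro z hz
          rcases List.mem_cons.mp hz with rfl | hz
          · exact hxy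
          · exact lt_trans (hxa z hz) hxy
        · intro z hz
          rcases List.mem_cons.mp hz with rfl | hz
          · exact hposb z List.mem_cons_self
          · exact hposa z hz
        · intro z hz; exact hposb z (List.mem_cons_of_mem y hz)

lemma rawMove_involutive (n : ℕ) (a b : List ℕ) (h : Inv n (a, b)) :
    rawMove (rawMove (a, b)) = (a, b) := by
  obtain ⟨hlen, hpa, hpb, hposa, hposb⟩ := h
  match a, b with
  | [], [] => rfl
  | x :: a', [] =>
      simp only [rawMove]
      match a' with
      | [] => rfl
      | z :: a'' =>
          have hzx : z < x := (List.pairwise_cons.mp hpa).1 z List.mem_cons_self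
          simp only [rawMove, if_neg (not_le.mpr hzx)]
  | [], y :: b' =>
      simp only [rawMove]
      match b' with
      | [] => rfl
      | w :: b'' =>
          have hwy : w ≤ y := (List.pairwise_cons.mp hpb).1 w List.mem_cons_self
          simp only [rawMove, if_pos hwy]
  | x :: a', y :: b' =>
      simp only [rawMove]
      split_ifs with hxy
      · match a' with
        | [] => simp only [rawMove]
        | z :: a'' =>
            have hzx : z < x := (List.pairwise_cons.mp hpa).1 z List.mem_cons_self
            simp only [rawMove, if_neg (not_le.mpr hzx)]
      · match b' with
        | [] => simp only [rawMove, if_pos (le_of_not_ge hxy)]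
        | w :: b'' =>
            have hwy : w ≤ y := (List.pairwise_cons.mp hpb).1 w List.mem_cons_self
            simp only [rawMove, if_pos hwy, if_pos (le_of_not_ge hxy)]

def move (n : ℕ) : State n → State n := fun s =>
  ⟨rawMove (s.1.1, s.1.2), inv_rawMove n s.1.1 s.1.2 (by
    have := s.2; exact this)⟩

lemma move_involutive (n : ℕ) : Function.Involutive (move n) := by
  intro s
  apply Subtype.ext
  show rawMove _ = s.1
  have h := rawMove_involutive n s.1.1 s.1.2 s.2
  calc rawMove ((move n s).1.1, (move n s).1.2)
      = rawMove (rawMove (s.1.1, s.1.2)) := rfl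
    _ = (s.1.1, s.1.2) := h
    _ = s.1 := rfl

lemma F_move (k n : ℕ) (hn : n ≠ 0) (s : State n) : F k n (move n s) = - F k n s := by
  obtain ⟨⟨a, b⟩, h⟩ := s
  obtain ⟨hlen, hpa, hpb, hposa, hposb⟩ := h
  show (-1 : ℝ)^(rawMove (a, b)).1.length *
      (wt k (rawMove (a, b)).1 * wt k (rawMove (a, b)).2)
    = -((-1 : ℝ)^a.length * (wt k a * wt k b))
  match a, b with
  | [], [] => exact absurd hlen.symm hn
  | x :: a', [] => simp only [rawMove]; simp [pow_succ, mul_comm]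
  | [], y :: b' => simp only [rawMove]; simp [pow_succ, mul_comm]
  | x :: a', y :: b' =>
      simp only [rawMove]
      split_ifs with hxy
      · simp only [List.length_cons, wt_cons, pow_succ]; ring
      · simp only [List.length_cons, wt_cons, pow_succ]; ring

instance state₀Unique : Unique (State 0) where
  default := ⟨([], []), rfl, List.Pairwise.nil, List.Pairwise.nil, by simp, by simp⟩
  uniq s := by
    apply Subtype.ext
    obtain ⟨⟨a, b⟩, h⟩ := s
    have h1 := h.1
    simp only at h1
    have ha : a = [] := List.length_eq_zero_iff.mp (by omega)
    have hb : b = [] := List.length_eq_zero_iff.mp (by omega)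
    simp [ha, hb]

end ZAC

theorem zeta_alternating_convolution (k : ℕ) (hk : 2 ≤ k) (n : ℕ) :
    ∑ i ∈ Finset.range (n + 1),
        (-1 : ℝ) ^ i * mzv (List.replicate i k) * mzvStar (List.replicate (n - i) k) =
      if n = 0 then 1 else 0 := by
  rw [ZAC.step1 k hk n]
  rcases Nat.eq_zero_or_pos n with rfl | hn
  · rw [if_pos rfl,
      tsum_eq_single (default : ZAC.State 0) (fun b hb => absurd (Unique.eq_default b) hb)]
    show (-1 : ℝ)^(List.length []) * (ZAC.wt k [] * ZAC.wt k []) = 1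
    simp
  · rw [if_neg (by omega)]
    have hmove := ZAC.move_involutive n
    have h1 : ∑' s : ZAC.State n, ZAC.F k n s = - ∑' s : ZAC.State n, ZAC.F k n s := by
      calc ∑' s : ZAC.State n, ZAC.F k n s
          = ∑' s : ZAC.State n, ZAC.F k n (Function.Involutive.toPerm _ hmove s) :=
            ((Function.Involutive.toPerm _ hmove).tsum_eq (ZAC.F k n)).symm
        _ = ∑' s : ZAC.State n, -(ZAC.F k n s) :=
            tsum_congr fun s => ZAC.F_move k n (by omega) s
        _ = - ∑' s : ZAC.State n, ZAC.F k n s := tsum_neg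
    linarith
end

section
/- For any integer k ≥ 2 and any positive integer n, the alternating convolution sum over i from 0 to n of (-1)^i * t({k}^i) * t^⋆({k}^(n-i)) equals 0, where t and t^⋆ denote the multiple t-value and multiple t-star value. -/
namespace TAltConv

set_option linter.deprecated false

/-- weight of a list -/
noncomputable def w (k : ℕ) (l : List ℕ) : ℝ := (l.map (fun x : ℕ => ((x : ℝ) ^ k)⁻¹)).prod

lemma w_cons (k x : ℕ) (l : List ℕ) : w k (x :: l) = ((x : ℝ) ^ k)⁻¹ * w k l := by
  simp [w]

lemma w_nonneg (k : ℕ) (l : List ℕ) : 0 ≤ w k l := by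
  apply List.prod_nonneg
  intro a ha
  simp only [List.mem_map] at ha
  obtain ⟨x, -, rfl⟩ := ha
  exact inv_nonneg.2 (pow_nonneg (Nat.cast_nonneg x) k)

/-- strict-decreasing odd lists of length n -/
def A (n : ℕ) : Set (List ℕ) :=
  {l | l.length = n ∧ l.Chain' (· > ·) ∧ ∀ x ∈ l, 0 < x ∧ Odd x}

/-- weak-decreasing odd lists of length n -/
def B (n : ℕ) : Set (List ℕ) :=
  {l | l.length = n ∧ l.Chain' (· ≥ ·) ∧ ∀ x ∈ l, 0 < x ∧ Odd x}

/-- The equivalence between Fin-tuples and lists, strict case. -/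
noncomputable def eqvA (n : ℕ) :
    {m : Fin n → ℕ //
      (∀ i j : Fin n, i < j → m j < m i) ∧ (∀ i, 0 < m i) ∧ ∀ i, Odd (m i)} ≃ ↥(A n) :=
  Equiv.ofBijective
    (fun m => ⟨List.ofFn m.1, by simp, by
        rw [List.Chain', List.isChain_iff_pairwise]
        exact List.pairwise_ofFn.2 (fun i j h => m.2.1 i j h), by
        intro x hx
        rw [List.mem_ofFn] at hx
        obtain ⟨i, rfl⟩ := hx
        exact ⟨m.2.2.1 i, m.2.2.2 i⟩⟩)
    (by
      constructor
      · intro m₁ m₂ h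
        exact Subtype.ext (List.ofFn_injective (congrArg Subtype.val h))
      · rintro ⟨l, hlen, hch, hmem⟩
        have hpw := List.pairwise_iff_get.1 (List.isChain_iff_pairwise.1 hch)
        refine ⟨⟨fun i => l.get ⟨i.1, by omega⟩, ?_, ?_, ?_⟩, ?_⟩
        · intro i j hij
          exact hpw ⟨i.1, by omega⟩ ⟨j.1, by omega⟩ hij
        · intro i; exact (hmem _ (List.get_mem l ⟨i.1, _⟩)).1
        · intro i; exact (hmem _ (List.get_mem l ⟨i.1, _⟩)).2
        · apply Subtype.ext
          apply List.ext_get (by simp [hlen])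
          intro nn h1 h2
          simp [List.get_ofFn])

/-- The equivalence between Fin-tuples and lists, weak case. -/
noncomputable def eqvB (n : ℕ) :
    {m : Fin n → ℕ //
      (∀ i j : Fin n, i < j → m j ≤ m i) ∧ (∀ i, 0 < m i) ∧ ∀ i, Odd (m i)} ≃ ↥(B n) :=
  Equiv.ofBijective
    (fun m => ⟨List.ofFn m.1, by simp, by
        rw [List.Chain', List.isChain_iff_pairwise]
        exact List.pairwise_ofFn.2 (fun i j h => m.2.1 i j h), by
        intro x hx
        rw [List.mem_ofFn] at hx
        obtain ⟨i, rfl⟩ := hx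
        exact ⟨m.2.2.1 i, m.2.2.2 i⟩⟩)
    (by
      constructor
      · intro m₁ m₂ h
        exact Subtype.ext (List.ofFn_injective (congrArg Subtype.val h))
      · rintro ⟨l, hlen, hch, hmem⟩
        have hpw := List.pairwise_iff_get.1 (List.isChain_iff_pairwise.1 hch)
        refine ⟨⟨fun i => l.get ⟨i.1, by omega⟩, ?_, ?_, ?_⟩, ?_⟩
        · intro i j hij
          exact hpw ⟨i.1, by omega⟩ ⟨j.1, by omega⟩ hij
        · intro i; exact (hmem _ (List.get_mem l ⟨i.1, _⟩)).1
        · intro i; exact (hmem _ (List.get_mem l ⟨i.1, _⟩)).2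
        · apply Subtype.ext
          apply List.ext_get (by simp [hlen])
          intro nn h1 h2
          simp [List.get_ofFn])

lemma auxA (k L n : ℕ) (hL : L = n) :
    (∑' m : {m : Fin L → ℕ //
      (∀ i j : Fin L, i < j → m j < m i) ∧ (∀ i, 0 < m i) ∧ ∀ i, Odd (m i)},
      ∏ i, ((m.1 i : ℝ) ^ k)⁻¹) =
    ∑' m : {m : Fin n → ℕ //
      (∀ i j : Fin n, i < j → m j < m i) ∧ (∀ i, 0 < m i) ∧ ∀ i, Odd (m i)},
      ∏ i, ((m.1 i : ℝ) ^ k)⁻¹ := by subst hL; rfl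

lemma auxB (k L n : ℕ) (hL : L = n) :
    (∑' m : {m : Fin L → ℕ //
      (∀ i j : Fin L, i < j → m j ≤ m i) ∧ (∀ i, 0 < m i) ∧ ∀ i, Odd (m i)},
      ∏ i, ((m.1 i : ℝ) ^ k)⁻¹) =
    ∑' m : {m : Fin n → ℕ //
      (∀ i j : Fin n, i < j → m j ≤ m i) ∧ (∀ i, 0 < m i) ∧ ∀ i, Odd (m i)},
      ∏ i, ((m.1 i : ℝ) ^ k)⁻¹ := by subst hL; rfl

lemma mtv_eq (k n : ℕ) : mtv (List.replicate n k) = ∑' l : ↥(A n), w k l.1 := by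
  unfold mtv
  simp only [List.get_eq_getElem, List.getElem_replicate]
  rw [auxA k _ n (List.length_replicate (n := n) (a := k))]
  rw [← Equiv.tsum_eq (eqvA n) (fun l : ↥(A n) => w k l.1)]
  apply tsum_congr
  intro m
  have : w k (List.ofFn m.1) = ∏ i, ((m.1 i : ℝ) ^ k)⁻¹ := by
    unfold w
    rw [List.map_ofFn, List.prod_ofFn]
    rfl
  show _ = w k (List.ofFn m.1)
  rw [this]

lemma mtvStar_eq (k n : ℕ) : mtvStar (List.replicate n k) = ∑' l : ↥(B n), w k l.1 := by
  unfold mtvStar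
  simp only [List.get_eq_getElem, List.getElem_replicate]
  rw [auxB k _ n (List.length_replicate (n := n) (a := k))]
  rw [← Equiv.tsum_eq (eqvB n) (fun l : ↥(B n) => w k l.1)]
  apply tsum_congr
  intro m
  have : w k (List.ofFn m.1) = ∏ i, ((m.1 i : ℝ) ^ k)⁻¹ := by
    unfold w
    rw [List.map_ofFn, List.prod_ofFn]
    rfl
  show _ = w k (List.ofFn m.1)
  rw [this]

lemma summable_base {k : ℕ} (hk : 2 ≤ k) : Summable (fun x : ℕ => ((x : ℝ) ^ k)⁻¹) :=
  Real.summable_nat_pow_inv.2 (by omega)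

lemma summable_pi {k : ℕ} (hk : 2 ≤ k) (n : ℕ) :
    Summable (fun m : Fin n → ℕ => ∏ i, ((m i : ℝ) ^ k)⁻¹) := by
  induction n with
  | zero => exact Summable.of_finite
  | succ n ih =>
    have h := Summable.mul_of_nonneg (summable_base hk) ih
      (fun x => inv_nonneg.2 (pow_nonneg (Nat.cast_nonneg x) k))
      (fun m => Finset.prod_nonneg fun i _ => inv_nonneg.2 (pow_nonneg (Nat.cast_nonneg _) k))
    refine Summable.congr ((Fin.consEquiv (fun _ : Fin (n+1) => ℕ)).symm.summable_iff.2 h) ?_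
    intro m
    rw [Fin.prod_univ_succ]
    rfl

lemma summable_subtype_list {k : ℕ} (hk : 2 ≤ k) {n : ℕ} (s : Set (List ℕ))
    (hs : ∀ l ∈ s, l.length = n) : Summable (fun l : ↥s => w k l.1) := by
  have hι : Function.Injective
      (fun l : ↥s => (fun i : Fin n => l.1.get ⟨i.1, lt_of_lt_of_eq i.2 (hs l.1 l.2).symm⟩)) := by
    intro l₁ l₂ h
    apply Subtype.ext
    apply List.ext_get (by rw [hs l₁.1 l₁.2, hs l₂.1 l₂.2])
    intro nn h1 h2
    have hn : nn < n := lt_of_lt_of_eq h1 (hs l₁.1 l₁.2)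
    exact congrFun h ⟨nn, hn⟩
  refine Summable.congr ((summable_pi hk n).comp_injective hι) ?_
  rintro ⟨l, hl⟩
  have hlen : l.length = n := hs l hl
  show (∏ i : Fin n, ((l.get ⟨i.1, _⟩ : ℝ) ^ k)⁻¹) = w k l
  subst hlen
  conv_rhs => rw [← List.ofFn_get l]
  unfold w
  rw [List.map_ofFn, List.prod_ofFn]
  rfl

lemma summable_A {k : ℕ} (hk : 2 ≤ k) (n : ℕ) : Summable (fun l : ↥(A n) => w k l.1) :=
  summable_subtype_list hk (A n) (fun _ hl => hl.1)

lemma summable_B {k : ℕ} (hk : 2 ≤ k) (n : ℕ) : Summable (fun l : ↥(B n) => w k l.1) :=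
  summable_subtype_list hk (B n) (fun _ hl => hl.1)

lemma summable_AB {k : ℕ} (hk : 2 ≤ k) (p q : ℕ) :
    Summable (fun z : ↥(A p) × ↥(B q) => w k z.1.1 * w k z.2.1) := by
  apply Summable.mul_of_nonneg (summable_A hk p) (summable_B hk q)
  · intro l; exact w_nonneg k l.1
  · intro l; exact w_nonneg k l.1

lemma headI_mem {l : List ℕ} (h : l ≠ []) : l.headI ∈ l := by
  cases l with
  | nil => exact absurd rfl h
  | cons a t => simp

lemma cons_headI_tail {l : List ℕ} (h : l ≠ []) : l.headI :: l.tail = l := by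
  cases l with
  | nil => exact absurd rfl h
  | cons a t => rfl

lemma chain'_cons_of_le {h : ℕ} {b : List ℕ} (hb : b.headI ≤ h) (hc : b.Chain' (· ≥ ·)) :
    (h :: b).Chain' (· ≥ ·) := by
  cases b with
  | nil => exact List.isChain_singleton _
  | cons y t => exact List.isChain_cons_cons.2 ⟨by simpa using hb, hc⟩

lemma chain'_cons_of_lt {h : ℕ} {a : List ℕ} (ha : a = [] ∨ a.headI < h)
    (hc : a.Chain' (· > ·)) : (h :: a).Chain' (· > ·) := by
  cases a with
  | nil => exact List.isChain_singleton _
  | cons y t =>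
      refine List.isChain_cons_cons.2 ⟨?_, hc⟩
      rcases ha with h' | h'
      · exact absurd h' (by simp)
      · simpa using h'

lemma head_lt_of_chain' {a : List ℕ} (hc : a.Chain' (· > ·)) (h : a.tail ≠ []) :
    a.tail.headI < a.headI := by
  match a with
  | [] => exact absurd rfl h
  | [x] => exact absurd rfl h
  | x :: y :: t => simpa using (List.isChain_cons_cons.1 hc).1

lemma tail_headI_le {b : List ℕ} (hc : b.Chain' (· ≥ ·)) : b.tail.headI ≤ b.headI := by
  match b with
  | [] => exact le_refl _
  | [x] => simp
  | x :: y :: t => simpa using (List.isChain_cons_cons.1 hc).1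

/-- the set of pairs where the "a"-part owns the maximum -/
def S (p q : ℕ) : Set (↥(A p) × ↥(B q)) :=
  {x | x.1.1 ≠ [] ∧ x.2.1.headI ≤ x.1.1.headI}

def fwd (p q : ℕ) (x : ↥(S (p+1) q)) : ↥((S p (q+1))ᶜ) :=
  ⟨(⟨x.1.1.1.tail,
      ⟨by have h1 : x.1.1.1.length = p + 1 := x.1.1.2.1
          simp [List.length_tail, h1],
       x.1.1.2.2.1.tail,
       fun y hy => x.1.1.2.2.2 y (List.mem_of_mem_tail hy)⟩⟩,
    ⟨x.1.1.1.headI :: x.1.2.1,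
      ⟨by simp [x.1.2.2.1],
       chain'_cons_of_le x.2.2 x.1.2.2.2.1,
       fun y hy => by
         rcases List.mem_cons.1 hy with rfl | hy'
         · exact x.1.1.2.2.2 _ (headI_mem x.2.1)
         · exact x.1.2.2.2.2 y hy'⟩⟩),
   by
     rintro ⟨hne, hle⟩
     have := head_lt_of_chain' x.1.1.2.2.1 hne
     simp only [List.headI_cons] at hle
     omega⟩

lemma fwd_weight (k p q : ℕ) (x : ↥(S (p+1) q)) :
    w k (fwd p q x).1.1.1 * w k (fwd p q x).1.2.1 = w k x.1.1.1 * w k x.1.2.1 := by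
  show w k x.1.1.1.tail * w k (x.1.1.1.headI :: x.1.2.1) = _
  rw [w_cons]
  conv_rhs => rw [← cons_headI_tail x.2.1, w_cons]
  ring

lemma fwd_bij (p q : ℕ) : Function.Bijective (fwd p q) := by
  constructor
  · rintro ⟨⟨⟨a, ha⟩, ⟨b, hb⟩⟩, hx⟩ ⟨⟨⟨a', ha'⟩, ⟨b', hb'⟩⟩, hx'⟩ h
    have h1 : a.tail = a'.tail := congrArg (fun z => z.1.1.1) h
    have h2 : a.headI :: b = a'.headI :: b' := congrArg (fun z => z.1.2.1) h
    obtain ⟨h2a, h2b⟩ := List.cons_eq_cons.1 h2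
    have hane : a ≠ [] := hx.1
    have hane' : a' ≠ [] := hx'.1
    have haa : a = a' := by
      rw [← cons_headI_tail hane, ← cons_headI_tail hane', h2a, h1]
    subst haa; subst h2b
    exact Subtype.ext rfl
  · rintro ⟨⟨⟨a, ha⟩, ⟨b, hb⟩⟩, hy⟩
    have hbne : b ≠ [] := by
      intro h
      have := hb.1
      rw [h] at this
      simp at this
    have hcond : a = [] ∨ a.headI < b.headI := by
      by_cases hA : a = []
      · exact Or.inl hA
      · right
        by_contra hlt
        push_neg at hlt
        exact hy ⟨hA, hlt⟩
    refine ⟨⟨(⟨b.headI :: a, ?_⟩, ⟨b.tail, ?_⟩), ?_⟩, ?_⟩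
    · refine ⟨by simp [ha.1], chain'_cons_of_lt hcond ha.2.1, fun y hy' => ?_⟩
      rcases List.mem_cons.1 hy' with rfl | hy''
      · exact hb.2.2 _ (headI_mem hbne)
      · exact ha.2.2 y hy''
    · exact ⟨by simp [List.length_tail, hb.1], hb.2.1.tail,
        fun y hy' => hb.2.2 y (List.mem_of_mem_tail hy')⟩
    · exact ⟨List.cons_ne_nil _ _, by simpa using tail_headI_le hb.2.1⟩
    · apply Subtype.ext
      refine Prod.ext (Subtype.ext ?_) (Subtype.ext ?_)
      · rfl
      · exact cons_headI_tail hbne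

noncomputable def Xs (k p q : ℕ) : ℝ := ∑' x : ↥(S p q), w k x.1.1.1 * w k x.1.2.1
noncomputable def Ys (k p q : ℕ) : ℝ := ∑' x : ↥((S p q)ᶜ), w k x.1.1.1 * w k x.1.2.1

lemma key (k p q : ℕ) : Xs k (p+1) q = Ys k p (q+1) := by
  unfold Xs Ys
  rw [← Equiv.tsum_eq (Equiv.ofBijective (fwd p q) (fwd_bij p q))
      (fun y : ↥((S p (q+1))ᶜ) => w k y.1.1.1 * w k y.1.2.1)]
  exact tsum_congr (fun x => (fwd_weight k p q x).symm)

lemma Xs_zero (k q : ℕ) : Xs k 0 q = 0 := by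
  haveI : IsEmpty ↥(S 0 q) := by
    refine ⟨fun x => ?_⟩
    obtain ⟨⟨⟨a, hA⟩, b⟩, hx⟩ := x
    exact hx.1 (List.length_eq_zero_iff.1 hA.1)
  exact tsum_empty

lemma Ys_zero (k p : ℕ) (hp : 1 ≤ p) : Ys k p 0 = 0 := by
  haveI : IsEmpty ↥((S p 0)ᶜ) := by
    refine ⟨fun x => ?_⟩
    obtain ⟨⟨⟨a, hA⟩, ⟨b, hB⟩⟩, hmem⟩ := x
    refine hmem ⟨?_, ?_⟩
    · intro h
      have h' : a = [] := h
      have hlena := hA.1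
      rw [h'] at hlena
      simp at hlena
      omega
    · show b.headI ≤ a.headI
      rw [List.length_eq_zero_iff.1 hB.1]
      exact Nat.zero_le _
  exact tsum_empty

lemma prod_eq {k : ℕ} (hk : 2 ≤ k) (p q : ℕ) :
    mtv (List.replicate p k) * mtvStar (List.replicate q k) = Xs k p q + Ys k p q := by
  rw [mtv_eq, mtvStar_eq,
    Summable.tsum_mul_tsum (summable_A hk p) (summable_B hk q) (summable_AB hk p q)]
  unfold Xs Ys
  exact (Summable.tsum_subtype_add_tsum_subtype_compl (summable_AB hk p q) (S p q)).symm

end TAltConv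

theorem t_alternating_convolution (k : ℕ) (hk : 2 ≤ k) (n : ℕ) (hn : 1 ≤ n) :
    ∑ i ∈ Finset.range (n + 1),
        (-1 : ℝ) ^ i * mtv (List.replicate i k) * mtvStar (List.replicate (n - i) k) = 0 := by
  open TAltConv in
  have step : ∀ i ∈ Finset.range (n+1),
      (-1:ℝ)^i * mtv (List.replicate i k) * mtvStar (List.replicate (n-i) k)
      = (-1:ℝ)^i * Xs k i (n-i) + (-1:ℝ)^i * Ys k i (n-i) := by
    intro i _
    rw [mul_assoc, prod_eq hk i (n-i), mul_add]
  rw [Finset.sum_congr rfl step, Finset.sum_add_distrib]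
  have e1 : ∑ i ∈ Finset.range (n+1), (-1:ℝ)^i * TAltConv.Xs k i (n-i)
      = (∑ i ∈ Finset.range n, (-1:ℝ)^(i+1) * TAltConv.Xs k (i+1) (n-(i+1)))
        + (-1:ℝ)^0 * TAltConv.Xs k 0 (n-0) :=
    Finset.sum_range_succ' _ n
  have e2 : ∑ i ∈ Finset.range (n+1), (-1:ℝ)^i * TAltConv.Ys k i (n-i)
      = (∑ i ∈ Finset.range n, (-1:ℝ)^i * TAltConv.Ys k i (n-i))
        + (-1:ℝ)^n * TAltConv.Ys k n (n-n) :=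
    Finset.sum_range_succ _ n
  have key2 : ∀ i < n, TAltConv.Xs k (i+1) (n-(i+1)) = TAltConv.Ys k i (n-i) := by
    intro i hi
    have h := TAltConv.key k i (n - i - 1)
    rw [show n - i - 1 + 1 = n - i from by omega] at h
    rw [show n - (i+1) = n - i - 1 from by omega]
    exact h
  have e3 : ∑ i ∈ Finset.range n, (-1:ℝ)^(i+1) * TAltConv.Xs k (i+1) (n-(i+1))
      = ∑ i ∈ Finset.range n, -((-1:ℝ)^i * TAltConv.Ys k i (n-i)) := by
    refine Finset.sum_congr rfl (fun i hi => ?_)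
    rw [key2 i (Finset.mem_range.1 hi), pow_succ]
    ring
  rw [e1, e2, e3, TAltConv.Xs_zero, show n - n = 0 from Nat.sub_self n,
    TAltConv.Ys_zero k n hn, Finset.sum_neg_distrib]
  ring
end
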